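/- arXiv:2604.13916 — 4 statements merged into one kernel-verified Lean document; each statement's English description precedes it below -/
import Mathlib

section
/- In the coproduct monoid ⟨X⟩ * [Y], if vw = v'w' with |v| = |v'|, |w| = |w'|, and v contains at least one variable from X (v is non-pure), then the commuting prefixes agree: p(v) = p(v'). -/
/-- Words over `X ⊔ Y`. -/
abbrev FM (X Y : Type) := FreeMonoid (X ⊕ Y)

/-- Swapping two adjacent `Y`-letters. -/
def yRel (X Y : Type) : FM X Y → FM X Y → Prop := fun a b =>
  ∃ (u v : FM X Y) (y₁ y₂ : Y),
    a = u * FreeMonoid.of (Sum.inr y₁) * FreeMonoid.of (Sum.inr y₂) * v ∧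
    b = u * FreeMonoid.of (Sum.inr y₂) * FreeMonoid.of (Sum.inr y₁) * v

/-- The congruence generated by swaps of adjacent `Y`-letters. -/
def coCon (X Y : Type) : Con (FM X Y) := conGen (yRel X Y)

/-- The coproduct monoid `⟨X⟩ * [Y]`. -/
abbrev CoprodM (X Y : Type) := (coCon X Y).Quotient

/-- Length descends to the quotient. -/
def lenHom (X Y : Type) : CoprodM X Y →* Multiplicative ℕ :=
  Con.lift _ (FreeMonoid.lift fun _ => Multiplicative.ofAdd 1) (by
    refine Con.conGen_le.2 ?_
    rintro a b ⟨u, v, y₁, y₂, rfl, rfl⟩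
    simp [Con.ker_rel, map_mul])

/-- Length of an element of the coproduct monoid. -/
def len {X Y : Type} (w : CoprodM X Y) : ℕ := Multiplicative.toAdd (lenHom X Y w)

/-- A monoid recording the commuting prefix and suffix. -/
inductive PS (Y : Type) where
  | pure : Multiset Y → PS Y
  | mixed : Multiset Y → Multiset Y → PS Y

def PS.mul {Y : Type} : PS Y → PS Y → PS Y
  | .pure c, .pure d => .pure (c + d)
  | .pure c, .mixed p s => .mixed (c + p) s
  | .mixed p s, .pure d => .mixed p (s + d)
  | .mixed p _, .mixed _ s' => .mixed p s'

instance {Y : Type} : Monoid (PS Y) where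
  mul := PS.mul
  one := .pure 0
  mul_assoc a b c := by
    rcases a <;> rcases b <;> rcases c <;>
      simp [(· * ·), PS.mul, add_assoc]
  one_mul a := by rcases a <;> simp [(· * ·), PS.mul]
  mul_one a := by rcases a <;> simp [(· * ·), PS.mul]

/-- The prefix/suffix data descends to the quotient. -/
def psHom (X Y : Type) : CoprodM X Y →* PS Y :=
  Con.lift _ (FreeMonoid.lift fun a =>
      match a with
      | Sum.inl _ => PS.mixed 0 0
      | Sum.inr y => PS.pure {y}) (by
    refine Con.conGen_le.2 ?_
    rintro a b ⟨u, v, y₁, y₂, rfl, rfl⟩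
    have key : (PS.pure {y₁} : PS Y) * PS.pure {y₂} = PS.pure {y₂} * PS.pure {y₁} := by
      show PS.mul _ _ = PS.mul _ _
      simp [PS.mul, add_comm]
    simp only [Con.ker_rel, map_mul, FreeMonoid.lift_eval_of]
    rw [mul_assoc _ (PS.pure {y₁}), key, mul_assoc, ← mul_assoc, ← mul_assoc])

/-- The commuting prefix of an element, as a multiset of `Y`-variables. -/
def pre {X Y : Type} (w : CoprodM X Y) : Multiset Y :=
  match psHom X Y w with
  | .pure c => c
  | .mixed p _ => p

/-- The commuting suffix of an element, as a multiset of `Y`-variables. -/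
def suf {X Y : Type} (w : CoprodM X Y) : Multiset Y :=
  match psHom X Y w with
  | .pure c => c
  | .mixed _ s => s

/-- The canonical embedding of the free abelian monoid `[Y]` (words in `Y`). -/
def yEmb (X Y : Type) : FreeMonoid Y →* CoprodM X Y :=
  (Con.mk' (coCon X Y)).comp (FreeMonoid.map Sum.inr)

/-- An element is pure if it involves only `Y`-variables. -/
def IsPure {X Y : Type} (w : CoprodM X Y) : Prop := w ∈ MonoidHom.mrange (yEmb X Y)

/-- The pure element of the coproduct monoid corresponding to a multiset of
`Y`-variables. -/
noncomputable def pureElt {X Y : Type} (c : Multiset Y) : CoprodM X Y :=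
  yEmb X Y (FreeMonoid.ofList c.toList)

/-- The equivalence relation `∼`: equal lengths and either both pure, or equal
prefix lengths, equal middle parts and equal suffix lengths. -/
noncomputable def Sim {X Y : Type} (u v : CoprodM X Y) : Prop :=
  len u = len v ∧
  ((IsPure u ∧ IsPure v) ∨
    (¬ IsPure u ∧ ¬ IsPure v ∧
      Multiset.card (pre u) = Multiset.card (pre v) ∧
      Multiset.card (suf u) = Multiset.card (suf v) ∧
      ∃ m : CoprodM X Y,
        u = pureElt (pre u) * m * pureElt (suf u) ∧
        v = pureElt (pre v) * m * pureElt (suf v)))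


section Aux

variable {X Y : Type}

lemma len_mk (a : FM X Y) : len ((coCon X Y).mk' a) = a.toList.length := by
  induction a using FreeMonoid.recOn with
  | one => simp [len, lenHom, Con.lift_mk']
  | of_mul x xs ih =>
    have : ((coCon X Y).mk' (FreeMonoid.of x * xs)) =
        (coCon X Y).mk' (FreeMonoid.of x) * (coCon X Y).mk' xs := by simp
    rw [this]
    simp only [len, map_mul, toAdd_mul] at *
    rw [ih]
    have : Multiplicative.toAdd ((lenHom X Y) ((coCon X Y).mk' (FreeMonoid.of x))) = 1 := by
      rfl
    rw [this, FreeMonoid.toList_of_mul]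
    simp [add_comm]

lemma psHom_mk (a : FM X Y) :
    psHom X Y ((coCon X Y).mk' a) =
      FreeMonoid.lift (fun b =>
        match b with
        | Sum.inl _ => PS.mixed 0 0
        | Sum.inr y => PS.pure ({y} : Multiset Y)) a := by
  rfl

lemma PS.pure_mul_pure (c d : Multiset Y) : PS.pure c * PS.pure d = PS.pure (c + d) := rfl
lemma PS.pure_mul_mixed (c p s : Multiset Y) :
    PS.pure c * PS.mixed p s = PS.mixed (c + p) s := rfl
lemma PS.mixed_mul_pure (p s d : Multiset Y) :
    PS.mixed p s * PS.pure d = PS.mixed p (s + d) := rfl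
lemma PS.mixed_mul_mixed (p s p' s' : Multiset Y) :
    PS.mixed p s * PS.mixed p' s' = PS.mixed p s' := rfl
lemma PS.one_eq : (1 : PS Y) = PS.pure 0 := rfl

lemma PS.mixed_mul (p s : Multiset Y) (b : PS Y) :
    ∃ s', PS.mixed p s * b = PS.mixed p s' := by
  cases b <;> exact ⟨_, rfl⟩

lemma psHom_yEmb (g : FreeMonoid Y) :
    ∃ c : Multiset Y, psHom X Y (yEmb X Y g) = PS.pure c ∧
      Multiset.card c = len (yEmb X Y g) := by
  induction g using FreeMonoid.recOn with
  | one => exact ⟨0, by rw [map_one, map_one]; rfl, by simp [len]⟩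
  | of_mul y g ih =>
    obtain ⟨c, hc, hcard⟩ := ih
    refine ⟨{y} + c, ?_, ?_⟩
    · rw [map_mul, map_mul, hc]
      have : psHom X Y (yEmb X Y (FreeMonoid.of y)) = PS.pure ({y} : Multiset Y) := by
        rw [yEmb, MonoidHom.comp_apply, FreeMonoid.map_of, psHom_mk, FreeMonoid.lift_eval_of]
      rw [this]; rfl
    · simp only [map_mul, len, map_mul, toAdd_mul]
      have : len (yEmb X Y (FreeMonoid.of y)) = 1 := by
        rw [len, yEmb, MonoidHom.comp_apply, FreeMonoid.map_of, lenHom]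
        rfl
      simp only [len] at this hcard ⊢
      simp [Multiset.card_add, hcard, this]
      omega

lemma isPure_of_psHom_pure (u : CoprodM X Y) (c : Multiset Y)
    (h : psHom X Y u = PS.pure c) : IsPure u := by
  obtain ⟨a, rfl⟩ := Con.mk'_surjective u
  induction a using FreeMonoid.recOn generalizing c with
  | one => exact ⟨1, by simp⟩
  | of_mul x xs ih =>
    have hsplit : ((coCon X Y).mk' (FreeMonoid.of x * xs)) =
        (coCon X Y).mk' (FreeMonoid.of x) * (coCon X Y).mk' xs := by simp
    rw [hsplit, map_mul] at h
    cases x with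
    | inl x =>
      rw [show psHom X Y ((coCon X Y).mk' (FreeMonoid.of (Sum.inl x : X ⊕ Y)))
          = PS.mixed 0 0 by rw [psHom_mk, FreeMonoid.lift_eval_of]] at h
      obtain ⟨s', hs'⟩ := PS.mixed_mul (Y := Y) 0 0 (psHom X Y ((coCon X Y).mk' xs))
      rw [hs'] at h; exact absurd h (by simp)
    | inr y =>
      rw [show psHom X Y ((coCon X Y).mk' (FreeMonoid.of (Sum.inr y : X ⊕ Y)))
          = PS.pure ({y} : Multiset Y) by rw [psHom_mk, FreeMonoid.lift_eval_of]] at h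
      rcases hx : psHom X Y ((coCon X Y).mk' xs) with d | ⟨p, s⟩
      · obtain ⟨g, hg⟩ := ih d hx
        refine ⟨FreeMonoid.of y * g, ?_⟩
        rw [map_mul, hg, hsplit]
        congr 1
      · rw [hx, PS.pure_mul_mixed] at h
        exact absurd h (by simp)

lemma card_pre_lt_len (u : CoprodM X Y) (p s : Multiset Y)
    (h : psHom X Y u = PS.mixed p s) : Multiset.card p + 1 ≤ len u := by
  obtain ⟨a, rfl⟩ := Con.mk'_surjective u
  induction a using FreeMonoid.recOn generalizing p s with
  | one => simp only [map_one] at h; rw [PS.one_eq] at h; exact absurd h (by simp)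
  | of_mul x xs ih =>
    have hsplit : ((coCon X Y).mk' (FreeMonoid.of x * xs)) =
        (coCon X Y).mk' (FreeMonoid.of x) * (coCon X Y).mk' xs := by simp
    have hlen : len ((coCon X Y).mk' (FreeMonoid.of x * xs)) =
        1 + len ((coCon X Y).mk' xs) := by
      rw [len_mk, len_mk, FreeMonoid.toList_of_mul]; simp [Nat.add_comm]
    rw [hsplit, map_mul] at h
    cases x with
    | inl x =>
      rw [show psHom X Y ((coCon X Y).mk' (FreeMonoid.of (Sum.inl x : X ⊕ Y)))
          = PS.mixed 0 0 by rw [psHom_mk, FreeMonoid.lift_eval_of]] at h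
      rcases hx : psHom X Y ((coCon X Y).mk' xs) with d | ⟨p', s'⟩ <;> rw [hx] at h
      · obtain ⟨h1, -⟩ := PS.mixed.inj (PS.mixed_mul_pure 0 0 d ▸ h)
        rw [hlen, ← h1]
        simp
      · obtain ⟨h1, -⟩ := PS.mixed.inj (PS.mixed_mul_mixed 0 0 p' s' ▸ h)
        rw [hlen, ← h1]
        simp
    | inr y =>
      rw [show psHom X Y ((coCon X Y).mk' (FreeMonoid.of (Sum.inr y : X ⊕ Y)))
          = PS.pure ({y} : Multiset Y) by rw [psHom_mk, FreeMonoid.lift_eval_of]] at h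
      rcases hx : psHom X Y ((coCon X Y).mk' xs) with d | ⟨p', s'⟩ <;> rw [hx] at h
      · rw [PS.pure_mul_pure] at h
        exact absurd h (by simp)
      · rw [PS.pure_mul_mixed] at h
        obtain ⟨h1, -⟩ := PS.mixed.inj h
        have := ih p' s' hx
        rw [hlen, ← h1]
        simp only [Multiset.card_add, Multiset.card_singleton]
        omega

end Aux

/-- Lemma 3.5(ii): if `vw = v'w'` with `|v| = |v'|`, `|w| = |w'|` and `v`
non-pure, then `p(v) = p(v')`. -/
theorem coprodM_pre_eq_of_mul_eq {X Y : Type} (v w v' w' : CoprodM X Y)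
    (h : v * w = v' * w') (hv : len v = len v') (hw : len w = len w')
    (hnp : ¬ IsPure v) :
    pre v = pre v' := by
  -- v is mixed
  obtain ⟨p, s, hps⟩ : ∃ p s, psHom X Y v = PS.mixed p s := by
    rcases hx : psHom X Y v with c | ⟨p, s⟩
    · exact absurd (isPure_of_psHom_pure v c hx) hnp
    · exact ⟨p, s, rfl⟩
  -- v' is also mixed
  obtain ⟨p', s', hps'⟩ : ∃ p' s', psHom X Y v' = PS.mixed p' s' := by
    rcases hx : psHom X Y v' with c | ⟨p', s'⟩
    · -- v' pure: contradiction via lengths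
      exfalso
      have hpure : IsPure v' := isPure_of_psHom_pure v' c hx
      obtain ⟨g, rfl⟩ := hpure
      obtain ⟨c', hc', hcard⟩ := psHom_yEmb (X := X) g
      rw [hx] at hc'
      obtain rfl : c = c' := PS.pure.inj hc'
      have h1 := congrArg (psHom X Y) h
      rw [map_mul, map_mul, hps, hx] at h1
      obtain ⟨s₂, hs₂⟩ := PS.mixed_mul p s (psHom X Y w)
      rw [hs₂] at h1
      rcases hw' : psHom X Y w' with d | ⟨pw, sw⟩ <;> rw [hw'] at h1
      · rw [PS.pure_mul_pure] at h1
        exact absurd h1 (by simp)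
      · rw [PS.pure_mul_mixed] at h1
        obtain ⟨hp, -⟩ := PS.mixed.inj h1
        have hlt := card_pre_lt_len v p s hps
        rw [hp, Multiset.card_add] at hlt
        omega
    · exact ⟨p', s', rfl⟩
  -- compare prefixes through the product
  have h1 := congrArg (psHom X Y) h
  rw [map_mul, map_mul, hps, hps'] at h1
  obtain ⟨s₂, hs₂⟩ := PS.mixed_mul p s (psHom X Y w)
  obtain ⟨s₃, hs₃⟩ := PS.mixed_mul p' s' (psHom X Y w')
  rw [hs₂, hs₃] at h1
  obtain ⟨hpp, -⟩ := PS.mixed.inj h1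
  simp [pre, hps, hps', hpp]
end

section
/- In the coproduct monoid ⟨X⟩ * [Y], if vw = v'w' with |v| = |v'| and |w| = |w'|, then s(v)p(w) = s(v')p(w') in [Y]. -/
namespace CoprodAux

variable {X Y : Type}

/-- Multiset of `Y`-letters in the leading `Y`-run of a list. -/
def preM (l : List (X ⊕ Y)) : Multiset Y :=
  ((l.takeWhile Sum.isRight).filterMap fun a => a.getRight? : List Y)

/-- Multiset of `Y`-letters in the trailing `Y`-run of a list. -/
def sufM (l : List (X ⊕ Y)) : Multiset Y := preM l.reverse

@[simp] lemma preM_nil : preM ([] : List (X ⊕ Y)) = 0 := rfl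

@[simp] lemma preM_inl_cons (x : X) (l : List (X ⊕ Y)) :
    preM (Sum.inl x :: l) = 0 := by
  simp [preM, List.takeWhile]

@[simp] lemma preM_inr_cons (y : Y) (l : List (X ⊕ Y)) :
    preM (Sum.inr y :: l) = {y} + preM l := by
  simp [preM, List.takeWhile]

lemma preM_append (w z : List (X ⊕ Y)) :
    preM (w ++ z) = preM w + (if w.all Sum.isRight then preM z else 0) := by
  induction w with
  | nil => simp
  | cons a w ih =>
    cases a with
    | inl x => simp
    | inr y =>
      simp only [List.cons_append, preM_inr_cons, ih, List.all_cons, Sum.isRight_inr,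
        Bool.true_and, add_assoc]

lemma preM_congr {z₁ z₂ : List (X ⊕ Y)} (w : List (X ⊕ Y)) (h : preM z₁ = preM z₂) :
    preM (w ++ z₁) = preM (w ++ z₂) := by
  rw [preM_append, preM_append, h]

lemma sufM_append (z w : List (X ⊕ Y)) :
    sufM (z ++ w) = sufM w + (if w.all Sum.isRight then sufM z else 0) := by
  unfold sufM
  rw [List.reverse_append, preM_append, List.all_reverse]

lemma sufM_congr {z₁ z₂ : List (X ⊕ Y)} (w : List (X ⊕ Y)) (h : sufM z₁ = sufM z₂) :
    sufM (z₁ ++ w) = sufM (z₂ ++ w) := by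
  rw [sufM_append, sufM_append, h]

@[simp] lemma sufM_nil : sufM ([] : List (X ⊕ Y)) = 0 := rfl

@[simp] lemma sufM_append_inr (l : List (X ⊕ Y)) (y : Y) :
    sufM (l ++ [Sum.inr y]) = sufM l + {y} := by
  simp only [sufM, List.reverse_append, List.reverse_cons, List.reverse_nil, List.nil_append,
    List.singleton_append, preM_inr_cons]
  rw [add_comm]

@[simp] lemma sufM_append_inl (l : List (X ⊕ Y)) (x : X) :
    sufM (l ++ [Sum.inl x]) = 0 := by
  simp only [sufM, List.reverse_append, List.reverse_cons, List.reverse_nil, List.nil_append,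
    List.singleton_append, preM_inl_cons]

lemma sufM_single (a : X ⊕ Y) : sufM [a] = preM [a] := rfl

lemma sufM_cons (a : X ⊕ Y) (l : List (X ⊕ Y)) :
    sufM (a :: l) = sufM l + (if l.all Sum.isRight then preM [a] else 0) := by
  rw [show a :: l = [a] ++ l from rfl, sufM_append, sufM_single]

lemma preM_eq_sufM_of_all {l : List (X ⊕ Y)} (h : l.all Sum.isRight) :
    preM l = sufM l := by
  induction l with
  | nil => rfl
  | cons a l ih =>
    simp only [List.all_cons, Bool.and_eq_true] at h
    obtain ⟨ha, hl⟩ := h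
    cases a with
    | inl x => simp at ha
    | inr y =>
      rw [preM_inr_cons, sufM_cons, ih hl, if_pos hl, preM_inr_cons, preM_nil,
        add_zero, add_comm]

/-- The block of `Y`-letters around a cut at position `k`. -/
def blockAt (l : List (X ⊕ Y)) (k : ℕ) : Multiset Y :=
  sufM (l.take k) + preM (l.drop k)

lemma blockAt_append (a b : List (X ⊕ Y)) :
    blockAt (a ++ b) a.length = sufM a + preM b := by
  rw [blockAt, List.take_left, List.drop_left]

lemma sufM_swap (u : List (X ⊕ Y)) (y₁ y₂ : Y) :
    sufM (u ++ [Sum.inr y₁, Sum.inr y₂]) = sufM (u ++ [Sum.inr y₂, Sum.inr y₁]) := by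
  have h1 : u ++ [Sum.inr y₁, Sum.inr y₂] = (u ++ [Sum.inr y₁]) ++ [(Sum.inr y₂ : X ⊕ Y)] := by
    simp
  have h2 : u ++ [Sum.inr y₂, Sum.inr y₁] = (u ++ [Sum.inr y₂]) ++ [(Sum.inr y₁ : X ⊕ Y)] := by
    simp
  rw [h1, h2, sufM_append_inr, sufM_append_inr, sufM_append_inr, sufM_append_inr]
  abel

lemma blockAt_swap (u v : List (X ⊕ Y)) (y₁ y₂ : Y) (k : ℕ) :
    blockAt (u ++ Sum.inr y₁ :: Sum.inr y₂ :: v) k =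
    blockAt (u ++ Sum.inr y₂ :: Sum.inr y₁ :: v) k := by
  unfold blockAt
  rw [List.take_append, List.take_append,
    List.drop_append, List.drop_append]
  rcases le_or_gt k u.length with hk | hk
  · -- cut inside u
    have h0 : k - u.length = 0 := Nat.sub_eq_zero_of_le hk
    rw [h0]
    simp only [List.take_zero, List.append_nil, List.drop_zero]
    congr 1
    apply preM_congr
    simp only [preM_inr_cons]
    abel
  · have hu : u.length ≤ k := le_of_lt hk
    rw [List.take_of_length_le hu, List.drop_of_length_le hu, List.nil_append, List.nil_append]
    rcases eq_or_lt_of_le (Nat.succ_le_of_lt hk) with hk1 | hk2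
    · -- cut right after the first swapped letter
      have h1 : k - u.length = 1 := by omega
      rw [h1]
      show sufM (u ++ [Sum.inr y₁]) + preM (Sum.inr y₂ :: v) =
        sufM (u ++ [Sum.inr y₂]) + preM (Sum.inr y₁ :: v)
      rw [sufM_append_inr, sufM_append_inr, preM_inr_cons, preM_inr_cons]
      abel
    · -- cut after both swapped letters
      have h2 : k - u.length = (k - u.length - 2) + 1 + 1 := by omega
      rw [h2]
      simp only [List.take_succ_cons, List.drop_succ_cons]
      congr 1
      set j := k - u.length - 2
      have e1 : u ++ Sum.inr y₁ :: Sum.inr y₂ :: List.take j v =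
          (u ++ [Sum.inr y₁, Sum.inr y₂]) ++ List.take j v := by simp
      have e2 : u ++ Sum.inr y₂ :: Sum.inr y₁ :: List.take j v =
          (u ++ [Sum.inr y₂, Sum.inr y₁]) ++ List.take j v := by simp
      rw [e1, e2]
      exact sufM_congr _ (sufM_swap u y₁ y₂)

end CoprodAux

namespace CoprodAux

variable {X Y : Type}

lemma yRel_mul_right {a b : FM X Y} (c : FM X Y) (h : yRel X Y a b) :
    yRel X Y (a * c) (b * c) := by
  obtain ⟨u, v, y₁, y₂, rfl, rfl⟩ := h
  exact ⟨u, v * c, y₁, y₂, by simp [mul_assoc], by simp [mul_assoc]⟩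

lemma yRel_mul_left {a b : FM X Y} (c : FM X Y) (h : yRel X Y a b) :
    yRel X Y (c * a) (c * b) := by
  obtain ⟨u, v, y₁, y₂, rfl, rfl⟩ := h
  exact ⟨c * u, v, y₁, y₂, by simp [mul_assoc], by simp [mul_assoc]⟩

lemma eqv_mul_right {a b : FM X Y} (c : FM X Y)
    (h : Relation.EqvGen (yRel X Y) a b) :
    Relation.EqvGen (yRel X Y) (a * c) (b * c) := by
  induction h with
  | rel x y hxy => exact .rel _ _ (yRel_mul_right c hxy)
  | refl x => exact .refl _
  | symm x y _ ih => exact .symm _ _ ih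
  | trans x y z _ _ ih₁ ih₂ => exact .trans _ _ _ ih₁ ih₂

lemma eqv_mul_left {a b : FM X Y} (c : FM X Y)
    (h : Relation.EqvGen (yRel X Y) a b) :
    Relation.EqvGen (yRel X Y) (c * a) (c * b) := by
  induction h with
  | rel x y hxy => exact .rel _ _ (yRel_mul_left c hxy)
  | refl x => exact .refl _
  | symm x y _ ih => exact .symm _ _ ih
  | trans x y z _ _ ih₁ ih₂ => exact .trans _ _ _ ih₁ ih₂

/-- The equivalence generated by swaps is already a congruence. -/
def eqvCon (X Y : Type) : Con (FM X Y) where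
  r := Relation.EqvGen (yRel X Y)
  iseqv := Relation.EqvGen.is_equivalence _
  mul' := fun {w x y z} h₁ h₂ =>
    Relation.EqvGen.trans _ _ _ (eqv_mul_right y h₁) (eqv_mul_left x h₂)

lemma coCon_to_eqv {a b : FM X Y} (h : coCon X Y a b) :
    Relation.EqvGen (yRel X Y) a b :=
  Con.le_def.mp ((Con.conGen_le (c := eqvCon X Y)).2 (fun x y hxy => Relation.EqvGen.rel x y hxy)) h

lemma blockAt_of_eqv {a b : FM X Y}
    (h : Relation.EqvGen (yRel X Y) a b) (k : ℕ) :
    blockAt a.toList k = blockAt b.toList k := by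
  induction h with
  | rel x y hxy =>
    obtain ⟨u, v, y₁, y₂, rfl, rfl⟩ := hxy
    simp only [FreeMonoid.toList_mul, FreeMonoid.toList_of, List.append_assoc,
      List.singleton_append, List.cons_append]
    exact blockAt_swap u.toList v.toList y₁ y₂ k
  | refl x => rfl
  | symm x y _ ih => exact ih.symm
  | trans x y z _ _ ih₁ ih₂ => exact ih₁.trans ih₂

lemma PS_mul_def (a b : PS Y) : a * b = PS.mul a b := rfl

lemma psHom_mk (l : FM X Y) :
    psHom X Y ((coCon X Y).mk' l) =
      if l.toList.all Sum.isRight then PS.pure (preM l.toList)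
      else PS.mixed (preM l.toList) (sufM l.toList) := by
  show FreeMonoid.lift _ l = _
  induction l using FreeMonoid.recOn with
  | one =>
    rw [map_one, FreeMonoid.toList_one]
    rfl
  | of_mul x xs ih =>
    rw [map_mul, FreeMonoid.lift_eval_of, ih]
    have ht : (FreeMonoid.of x * xs).toList = x :: xs.toList := by
      rw [FreeMonoid.toList_mul, FreeMonoid.toList_of, List.singleton_append]
    rw [ht]
    cases x with
    | inl x =>
      have hsuf : sufM (Sum.inl x :: xs.toList) = sufM xs.toList := by
        rw [sufM_cons]
        split_ifs <;> simp
      by_cases hall : (FreeMonoid.toList xs).all Sum.isRight = true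
      · rw [if_pos hall, if_neg (by simp), preM_inl_cons, hsuf, PS_mul_def]
        show PS.mixed 0 (0 + preM xs.toList) = _
        rw [zero_add, preM_eq_sufM_of_all hall]
      · rw [if_neg hall, if_neg (by simp), preM_inl_cons, hsuf]
        rfl
    | inr y =>
      by_cases hall : (FreeMonoid.toList xs).all Sum.isRight = true
      · rw [if_pos hall, if_pos (by simp [hall]), preM_inr_cons]
        rfl
      · have hsuf : sufM (Sum.inr y :: xs.toList) = sufM xs.toList := by
          rw [sufM_cons, if_neg hall, add_zero]
        rw [if_neg hall, if_neg (by simp [hall]), preM_inr_cons, hsuf]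
        rfl

lemma pre_mk (l : FM X Y) : pre ((coCon X Y).mk' l) = preM l.toList := by
  unfold pre
  rw [psHom_mk]
  split_ifs <;> rfl

lemma suf_mk (l : FM X Y) : suf ((coCon X Y).mk' l) = sufM l.toList := by
  unfold suf
  rw [psHom_mk]
  split_ifs with h
  · exact preM_eq_sufM_of_all h
  · rfl

lemma len_mk (l : FM X Y) : len ((coCon X Y).mk' l) = l.toList.length := by
  unfold len
  show Multiplicative.toAdd (FreeMonoid.lift _ l) = _
  induction l using FreeMonoid.recOn with
  | one => rw [map_one, FreeMonoid.toList_one]; rfl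
  | of_mul x xs ih =>
    rw [map_mul, FreeMonoid.lift_eval_of, toAdd_mul, ih, FreeMonoid.toList_mul,
      FreeMonoid.toList_of, List.singleton_append, List.length_cons]
    simp [add_comm]

end CoprodAux


/-- Lemma 3.5(iv): if `vw = v'w'` with `|v| = |v'|` and `|w| = |w'|`, then
`s(v)p(w) = s(v')p(w')` in `[Y]`. -/
theorem coprodM_suf_pre_eq_of_mul_eq {X Y : Type} (v w v' w' : CoprodM X Y)
    (h : v * w = v' * w') (hv : len v = len v') (hw : len w = len w') :
    suf v + pre w = suf v' + pre w' := by
  obtain ⟨a, rfl⟩ := Con.mk'_surjective v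
  obtain ⟨b, rfl⟩ := Con.mk'_surjective w
  obtain ⟨a', rfl⟩ := Con.mk'_surjective v'
  obtain ⟨b', rfl⟩ := Con.mk'_surjective w'
  rw [← map_mul, ← map_mul] at h
  have hcc : coCon X Y (a * b) (a' * b') := by
    rw [Con.coe_mk'] at h
    exact (Con.eq _).mp h
  have hlen : a.toList.length = a'.toList.length := by
    rw [CoprodAux.len_mk, CoprodAux.len_mk] at hv
    exact hv
  have hblock := CoprodAux.blockAt_of_eqv (CoprodAux.coCon_to_eqv hcc) a.toList.length
  rw [FreeMonoid.toList_mul, FreeMonoid.toList_mul, CoprodAux.blockAt_append, hlen,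
    CoprodAux.blockAt_append] at hblock
  rw [CoprodAux.suf_mk, CoprodAux.pre_mk, CoprodAux.suf_mk, CoprodAux.pre_mk]
  exact hblock
end

section
/- Let a, b ∈ k⟨X⟩ * k[Y] be commuting homogeneous elements of equal total degree, and suppose v₀ ∈ supp(a) is non-pure. Then supp(a) ∩ [v₀] and supp(b) ∩ [v₀] are nonempty, and the sets of prefixes {p(v) : v ∈ supp(a) ∩ [v₀]} and {p(w) : w ∈ supp(b) ∩ [v₀]} coincide, as do the corresponding sets of suffixes. -/
namespace L41
open FreeMonoid
variable {X Y : Type}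

abbrev Blk (X Y : Type) := X × Multiset Y

/-- append to a nonempty block list, adding `c` to the last multiset. -/
def cat : List (Blk X Y) → Multiset Y → List (Blk X Y) → List (Blk X Y)
  | [], _, L₂ => L₂
  | [(x, m)], c, L₂ => (x, m + c) :: L₂
  | p :: q :: t, c, L₂ => p :: cat (q :: t) c L₂

theorem cat_concat (K : List (Blk X Y)) (x : X) (m c : Multiset Y) (L₂ : List (Blk X Y)) :
    cat (K ++ [(x, m)]) c L₂ = K ++ (x, m + c) :: L₂ := by
  induction K with
  | nil => rfl
  | cons p K ih =>
    cases K with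
    | nil => rfl
    | cons q K' => simpa [cat] using ih

/-- normal-form multiplication. -/
def nmul : Multiset Y × List (Blk X Y) → Multiset Y × List (Blk X Y) → Multiset Y × List (Blk X Y)
  | (c₁, []), (c₂, L₂) => (c₁ + c₂, L₂)
  | (c₁, p :: t), (c₂, L₂) => (c₁, cat (p :: t) c₂ L₂)

theorem nmul_nil (c₁ c₂ : Multiset Y) (L₂ : List (Blk X Y)) :
    nmul (c₁, ([] : List (Blk X Y))) (c₂, L₂) = (c₁ + c₂, L₂) := rfl

theorem nmul_ne (c₁ : Multiset Y) {L₁ : List (Blk X Y)} (h : L₁ ≠ []) (c₂ : Multiset Y)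
    (L₂ : List (Blk X Y)) : nmul (c₁, L₁) (c₂, L₂) = (c₁, cat L₁ c₂ L₂) := by
  cases L₁ with
  | nil => exact absurd rfl h
  | cons p t => rfl

theorem nmul_concat (c₁ : Multiset Y) (K : List (Blk X Y)) (x : X) (m c₂ : Multiset Y)
    (L₂ : List (Blk X Y)) :
    nmul (c₁, K ++ [(x, m)]) (c₂, L₂) = (c₁, K ++ (x, m + c₂) :: L₂) := by
  rw [nmul_ne _ (by simp) _ _, cat_concat]

theorem nmul_addfst (c c₁ : Multiset Y) (L₁ : List (Blk X Y)) (z : Multiset Y × List (Blk X Y)) :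
    nmul (c + c₁, L₁) z = (c + (nmul (c₁, L₁) z).1, (nmul (c₁, L₁) z).2) := by
  obtain ⟨c₂, L₂⟩ := z
  cases L₁ with
  | nil => simp [nmul, add_assoc]
  | cons p t => rfl

/-- The normal form of a word. -/
def nf : List (X ⊕ Y) → Multiset Y × List (Blk X Y)
  | [] => (0, [])
  | .inl x :: t => (0, (x, (nf t).1) :: (nf t).2)
  | .inr y :: t => ({y} + (nf t).1, (nf t).2)

theorem nf_append (u v : List (X ⊕ Y)) : nf (u ++ v) = nmul (nf u) (nf v) := by
  induction u with
  | nil =>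
    rcases hv : nf v with ⟨c₂, L₂⟩
    simp [nf, nmul_nil, hv]
  | cons a t ih =>
    cases a with
    | inr y =>
      show nf (.inr y :: (t ++ v)) = nmul (nf (.inr y :: t)) (nf v)
      rcases ht : nf t with ⟨c₁, L₁⟩
      simp only [nf, ih, ht, nmul_addfst]
    | inl x =>
      show nf (.inl x :: (t ++ v)) = nmul (nf (.inl x :: t)) (nf v)
      rcases ht : nf t with ⟨c₁, L₁⟩
      rcases hv : nf v with ⟨c₂, L₂⟩
      have hz : nf (t ++ v) = nmul (c₁, L₁) (c₂, L₂) := by rw [ih, ht, hv]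
      cases L₁ with
      | nil => simp only [nf, ht, hz, nmul, cat]
      | cons p t' => simp only [nf, ht, hz, nmul, cat]

theorem cat_ne_nil {L₁ : List (Blk X Y)} (h : L₁ ≠ []) (c : Multiset Y) (L₂ : List (Blk X Y)) :
    L₂ ≠ [] ∨ cat L₁ c L₂ ≠ [] := by
  rcases L₁.eq_nil_or_concat with rfl | ⟨K, ⟨x, m⟩, rfl⟩
  · exact absurd rfl h
  · right; rw [List.concat_eq_append, cat_concat]; simp

theorem nmul_swap (z : Multiset Y × List (Blk X Y)) (y₁ y₂ : Y) :
    nmul (nmul z ({y₁}, [])) ({y₂}, []) = nmul (nmul z ({y₂}, [])) ({y₁}, []) := by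
  obtain ⟨c, L⟩ := z
  rcases L.eq_nil_or_concat with rfl | ⟨K, ⟨x, m⟩, rfl⟩
  · simp only [nmul_nil]
    rw [add_assoc, add_assoc, add_comm ({y₁} : Multiset Y)]
  · rw [List.concat_eq_append, nmul_concat, nmul_concat, ← List.concat_eq_append,
      ← List.concat_eq_append]
    rw [List.concat_eq_append, List.concat_eq_append, nmul_concat, nmul_concat]
    rw [add_right_comm]

theorem nf_swap_invariant : ∀ g h : FM X Y, yRel X Y g h → nf g.toList = nf h.toList := by
  rintro g h ⟨u, v, y₁, y₂, rfl, rfl⟩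
  simp only [FreeMonoid.toList_mul, nf_append]
  have h1 : nf (FreeMonoid.of (Sum.inr y₁) : FM X Y).toList = (({y₁} : Multiset Y), []) := by
    simp [FreeMonoid.toList_of, nf]
  have h2 : nf (FreeMonoid.of (Sum.inr y₂) : FM X Y).toList = (({y₂} : Multiset Y), []) := by
    simp [FreeMonoid.toList_of, nf]
  rw [h1, h2, nmul_swap]

theorem nf_coCon_invariant : ∀ g h : FM X Y, coCon X Y g h → nf g.toList = nf h.toList := by
  intro g h hgh
  induction hgh with
  | of g h h' => exact nf_swap_invariant g h h'
  | refl => rfl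
  | symm _ ih => exact ih.symm
  | trans _ _ ih₁ ih₂ => exact ih₁.trans ih₂
  | mul _ _ ih₁ ih₂ => simp only [FreeMonoid.toList_mul, nf_append, ih₁, ih₂]

/-- Normal form of an element of the coproduct monoid. -/
def phi (w : CoprodM X Y) : Multiset Y × List (Blk X Y) :=
  Con.liftOn w (fun x => nf x.toList) nf_coCon_invariant

theorem phi_coe (x : FM X Y) : phi (↑x : CoprodM X Y) = nf x.toList := rfl

theorem phi_mul (u v : CoprodM X Y) : phi (u * v) = nmul (phi u) (phi v) := by
  induction u using Con.induction_on with
  | _ x =>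
    induction v using Con.induction_on with
    | _ y =>
      rw [← Con.coe_mul, phi_coe, phi_coe, phi_coe, FreeMonoid.toList_mul, nf_append]

/-- the image of an `X`-letter. -/
def ofX (x : X) : CoprodM X Y := (Con.mk' (coCon X Y)) (FreeMonoid.of (Sum.inl x))

/-- product of blocks. -/
noncomputable def bp : List (Blk X Y) → CoprodM X Y := fun L =>
  (L.map fun p => ofX p.1 * pureElt p.2).prod

/-- the element with a given normal form. -/
noncomputable def psic (c : Multiset Y) (L : List (Blk X Y)) : CoprodM X Y := pureElt c * bp L

theorem yEmb_ofList_perm {l l' : List Y} (h : l.Perm l') :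
    yEmb X Y (ofList l) = yEmb X Y (ofList l') := by
  induction h with
  | nil => rfl
  | cons a _ ih => rw [ofList_cons, ofList_cons, map_mul, map_mul, ih]
  | swap y₁ y₂ l =>
    show (Con.mk' (coCon X Y)).comp (FreeMonoid.map Sum.inr) _ =
      (Con.mk' (coCon X Y)).comp (FreeMonoid.map Sum.inr) _
    simp only [MonoidHom.comp_apply]
    have : ∀ g : FM X Y, Con.mk' (coCon X Y) g = (↑g : CoprodM X Y) := fun g => rfl
    rw [this, this, Con.eq]
    apply ConGen.Rel.of
    refine ⟨1, FreeMonoid.map Sum.inr (ofList l), y₂, y₁, ?_, ?_⟩ <;>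
      simp [ofList_cons, map_mul, mul_assoc]
  | trans _ _ ih₁ ih₂ => exact ih₁.trans ih₂

theorem pureElt_eq_of_coe {l : List Y} {c : Multiset Y} (h : (↑l : Multiset Y) = c) :
    pureElt c = yEmb X Y (ofList l) := by
  apply yEmb_ofList_perm
  rw [← Multiset.coe_eq_coe, Multiset.coe_toList, h]

theorem pureElt_zero : pureElt (0 : Multiset Y) = (1 : CoprodM X Y) := by
  rw [pureElt_eq_of_coe (l := []) (by simp)]; rfl

theorem pureElt_add (c d : Multiset Y) :
    pureElt (c + d) = (pureElt c * pureElt d : CoprodM X Y) := by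
  rw [pureElt_eq_of_coe (l := c.toList ++ d.toList) (by
      rw [← Multiset.coe_add, Multiset.coe_toList, Multiset.coe_toList])]
  show yEmb X Y (ofList (c.toList ++ d.toList)) = _
  have : ofList (c.toList ++ d.toList) = ofList c.toList * ofList d.toList := rfl
  rw [this, map_mul]; rfl

theorem pureElt_single (y : Y) :
    pureElt ({y} : Multiset Y) = ((FreeMonoid.of (Sum.inr y) : FM X Y) : CoprodM X Y) := by
  rw [pureElt_eq_of_coe (l := [y]) (by simp)]
  rfl

theorem phi_pureElt (c : Multiset Y) : phi (pureElt c : CoprodM X Y) = (c, []) := by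
  have key : ∀ l : List Y, phi (yEmb X Y (ofList l)) = ((↑l : Multiset Y), []) := by
    intro l
    induction l with
    | nil => rfl
    | cons y t ih =>
      rw [ofList_cons, map_mul, phi_mul, ih]
      have h1 : phi (yEmb X Y (of y)) = (({y} : Multiset Y), []) := rfl
      rw [h1, nmul_nil]
      simp
  rw [pureElt, key, Multiset.coe_toList]

theorem phi_ofX (x : X) : phi (ofX x : CoprodM X Y) = (0, [(x, 0)]) := rfl

theorem phi_bp (L : List (Blk X Y)) : phi (bp L : CoprodM X Y) = (0, L) := by
  induction L with
  | nil =>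
    show phi (1 : CoprodM X Y) = (0, [])
    rfl
  | cons p t ih =>
    obtain ⟨x, m⟩ := p
    show phi (ofX x * pureElt m * bp t) = _
    rw [phi_mul, phi_mul, phi_ofX, phi_pureElt, ih]
    show nmul (nmul (0, [(x, 0)]) (m, [])) (0, t) = _
    have h1 : nmul ((0 : Multiset Y), [(x, 0)]) (m, ([] : List (Blk X Y))) = (0, [(x, m)]) := by
      simp [nmul, cat]
    rw [h1]
    simp [nmul, cat]

theorem phi_psic (c : Multiset Y) (L : List (Blk X Y)) : phi (psic c L : CoprodM X Y) = (c, L) := by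
  rw [psic, phi_mul, phi_pureElt, phi_bp, nmul_nil, add_zero]

theorem psic_nf_word (l : List (X ⊕ Y)) :
    psic (nf l).1 (nf l).2 = ((ofList l : FM X Y) : CoprodM X Y) := by
  induction l with
  | nil =>
    show psic 0 [] = _
    rw [psic, pureElt_zero]
    rfl
  | cons a t ih =>
    have ih' : (pureElt (nf t).1 : CoprodM X Y) * bp (nf t).2 =
        ((ofList t : FM X Y) : CoprodM X Y) := ih
    cases a with
    | inr y =>
      have e : nf (Sum.inr y :: t) = ({y} + (nf t).1, (nf t).2) := rfl
      rw [e, ofList_cons, Con.coe_mul]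
      calc psic ({y} + (nf t).1, (nf t).2).1 ({y} + (nf t).1, (nf t).2).2
          = pureElt ({y} + (nf t).1) * bp (nf t).2 := by dsimp only [psic]
        _ = pureElt {y} * (pureElt (nf t).1 * bp (nf t).2) := by
            rw [pureElt_add, mul_assoc]
        _ = _ := by rw [pureElt_single, ih']
    | inl x =>
      have e : nf (Sum.inl x :: t) = (0, (x, (nf t).1) :: (nf t).2) := rfl
      rw [e, ofList_cons, Con.coe_mul]
      have h1 : (bp ((x, (nf t).1) :: (nf t).2) : CoprodM X Y) =
          ofX x * pureElt (nf t).1 * bp (nf t).2 := by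
        rw [bp, List.map_cons, List.prod_cons]; rfl
      calc psic (0, (x, (nf t).1) :: (nf t).2).1 (0, (x, (nf t).1) :: (nf t).2).2
          = pureElt 0 * bp ((x, (nf t).1) :: (nf t).2) := by dsimp only [psic]
        _ = ofX x * (pureElt (nf t).1 * bp (nf t).2) := by
            rw [pureElt_zero, one_mul, h1, mul_assoc]
        _ = _ := by rw [ih']; rfl

theorem psic_phi (w : CoprodM X Y) : psic (phi w).1 (phi w).2 = w := by
  induction w using Con.induction_on with
  | _ g =>
    rw [phi_coe]
    have := psic_nf_word (X := X) (Y := Y) g.toList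
    rw [ofList_toList] at this
    exact this
theorem psic_injective {c c' : Multiset Y} {L L' : List (Blk X Y)}
    (h : (psic c L : CoprodM X Y) = psic c' L') : c = c' ∧ L = L' := by
  have := congrArg phi h
  rw [phi_psic, phi_psic] at this
  exact ⟨congrArg Prod.fst this, congrArg Prod.snd this⟩

theorem psic_mul (c c' : Multiset Y) (L L' : List (Blk X Y)) :
    (psic c L : CoprodM X Y) * psic c' L' =
      psic (nmul (c, L) (c', L')).1 (nmul (c, L) (c', L')).2 := by
  have h := psic_phi ((psic c L : CoprodM X Y) * psic c' L')
  rw [phi_mul, phi_psic, phi_psic] at h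
  exact h.symm

theorem psic_nil_mul (c c' : Multiset Y) (L' : List (Blk X Y)) :
    (psic c [] : CoprodM X Y) * psic c' L' = psic (c + c') L' := by
  rw [psic_mul, nmul_nil]

theorem psic_concat_mul (c : Multiset Y) (K : List (Blk X Y)) (x : X) (m c' : Multiset Y)
    (L' : List (Blk X Y)) :
    (psic c (K ++ [(x, m)]) : CoprodM X Y) * psic c' L' = psic c (K ++ (x, m + c') :: L') := by
  rw [psic_mul, nmul_concat]

theorem pureElt_psic (c : Multiset Y) : (pureElt c : CoprodM X Y) = psic c [] := by
  rw [psic]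
  show _ = pureElt c * 1
  rw [mul_one]

theorem mk'_eq (g : FM X Y) : (coCon X Y).mk' g = ((g : FM X Y) : CoprodM X Y) := rfl

/-- block-list length. -/
def lb (L : List (Blk X Y)) : ℕ := (L.map fun p => 1 + Multiset.card p.2).sum

theorem lb_append (K L : List (Blk X Y)) : lb (K ++ L) = lb K + lb L := by
  simp [lb]

theorem lb_concat (K : List (Blk X Y)) (x : X) (m : Multiset Y) :
    lb (K ++ [(x, m)]) = lb K + (1 + Multiset.card m) := by
  simp [lb]

theorem len_coe (g : FM X Y) : len ((g : FM X Y) : CoprodM X Y) = g.toList.length := by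
  have : ∀ l : List (X ⊕ Y), len ((ofList l : FM X Y) : CoprodM X Y) = l.length := by
    intro l
    induction l with
    | nil =>
      show Multiplicative.toAdd (lenHom X Y ((1 : FM X Y) : CoprodM X Y)) = 0
      have : ((1 : FM X Y) : CoprodM X Y) = 1 := rfl
      rw [this, map_one]
      rfl
    | cons a t ih =>
      rw [ofList_cons, Con.coe_mul, len, map_mul]
      have h1 : lenHom X Y ((of a : FM X Y) : CoprodM X Y) = Multiplicative.ofAdd 1 := by
        show lenHom X Y (Con.mk' (coCon X Y) (of a)) = _
        rw [lenHom, mk'_eq]; erw [Con.lift_coe]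
      rw [h1]
      show 1 + Multiplicative.toAdd (lenHom X Y ((ofList t : FM X Y) : CoprodM X Y)) = (a :: t).length
      rw [← len, ih, List.length_cons]
      omega
  have h2 := this g.toList
  rwa [ofList_toList] at h2

theorem len_mul (u v : CoprodM X Y) : len (u * v) = len u + len v := by
  rw [len, len, len, map_mul]
  rfl

theorem len_pureElt (c : Multiset Y) : len (pureElt c : CoprodM X Y) = Multiset.card c := by
  show len ((Con.mk' (coCon X Y)).comp (FreeMonoid.map Sum.inr) (ofList c.toList)) = _
  have : (Con.mk' (coCon X Y)).comp (FreeMonoid.map Sum.inr) (ofList c.toList) =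
      ((FreeMonoid.map Sum.inr (ofList c.toList) : FM X Y) : CoprodM X Y) := rfl
  rw [this, len_coe, toList_map, toList_ofList, List.length_map, Multiset.length_toList]

theorem len_ofX (x : X) : len (ofX x : CoprodM X Y) = 1 := by
  have : (ofX x : CoprodM X Y) = ((of (Sum.inl x) : FM X Y) : CoprodM X Y) := rfl
  rw [this, len_coe, toList_of, List.length_singleton]

theorem len_bp (L : List (Blk X Y)) : len (bp L : CoprodM X Y) = lb L := by
  induction L with
  | nil =>
    show len (1 : CoprodM X Y) = 0
    rw [len, map_one]; rfl
  | cons p t ih =>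
    obtain ⟨x, m⟩ := p
    show len (ofX x * pureElt m * bp t) = _
    rw [len_mul, len_mul, len_ofX, len_pureElt, ih, lb]
    simp [lb]

theorem len_psic (c : Multiset Y) (L : List (Blk X Y)) :
    len (psic c L : CoprodM X Y) = Multiset.card c + lb L := by
  rw [psic, len_mul, len_pureElt, len_bp]

/-- psHom on pure elements. -/
theorem psHom_yEmb (l : List Y) :
    psHom X Y (yEmb X Y (ofList l)) = PS.pure (↑l : Multiset Y) := by
  induction l with
  | nil =>
    rw [show (ofList ([] : List Y)) = (1 : FreeMonoid Y) from rfl, map_one, map_one]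
    rfl
  | cons y t ih =>
    rw [ofList_cons, map_mul, map_mul, ih]
    have h1 : psHom X Y (yEmb X Y (of y)) = PS.pure ({y} : Multiset Y) := by
      show psHom X Y (Con.mk' (coCon X Y) (FreeMonoid.map Sum.inr (of y))) = _
      rw [psHom, mk'_eq]; erw [Con.lift_coe]; rw [map_of, FreeMonoid.lift_eval_of]
    rw [h1]
    show PS.mul (PS.pure {y}) (PS.pure ↑t) = _
    rw [PS.mul]
    simp [Multiset.singleton_add]

theorem psHom_pureElt (c : Multiset Y) :
    psHom X Y (pureElt c : CoprodM X Y) = PS.pure c := by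
  rw [pureElt, psHom_yEmb, Multiset.coe_toList]

theorem psHom_ofX (x : X) : psHom X Y (ofX x : CoprodM X Y) = PS.mixed 0 0 := by
  show psHom X Y (Con.mk' (coCon X Y) (of (Sum.inl x))) = _
  rw [psHom, mk'_eq]; erw [Con.lift_coe]; rw [FreeMonoid.lift_eval_of]

theorem psHom_bp (L : List (Blk X Y)) :
    psHom X Y (bp L : CoprodM X Y) = PS.pure 0 ∨
      ∃ t : Multiset Y, psHom X Y (bp L : CoprodM X Y) = PS.mixed 0 t := by
  induction L with
  | nil =>
    left
    show psHom X Y (1 : CoprodM X Y) = _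
    rw [map_one]; rfl
  | cons p t ih =>
    obtain ⟨x, m⟩ := p
    right
    show ∃ s, psHom X Y (ofX x * pureElt m * bp t) = PS.mixed 0 s
    rw [map_mul, map_mul, psHom_ofX, psHom_pureElt]
    have mul_def : ∀ u v : PS Y, u * v = PS.mul u v := fun _ _ => rfl
    rcases ih with h | ⟨s, h⟩
    · exact ⟨m, by rw [h]; simp [mul_def, PS.mul]⟩
    · exact ⟨s, by rw [h]; simp [mul_def, PS.mul]⟩

theorem psHom_psic_nil (c : Multiset Y) :
    psHom X Y (psic c [] : CoprodM X Y) = PS.pure c := by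
  rw [← pureElt_psic, psHom_pureElt]

theorem psHom_psic_concat (c : Multiset Y) (K : List (Blk X Y)) (x : X) (m : Multiset Y) :
    psHom X Y (psic c (K ++ [(x, m)]) : CoprodM X Y) = PS.mixed c m := by
  have mul_def : ∀ u v : PS Y, u * v = PS.mul u v := fun _ _ => rfl
  have hbp : (bp (K ++ [(x, m)]) : CoprodM X Y) = bp K * (ofX x * pureElt m) := by
    rw [bp, bp, List.map_append, List.prod_append]
    simp
  rw [psic, hbp, map_mul, map_mul, map_mul, psHom_pureElt, psHom_ofX, psHom_pureElt]
  rcases psHom_bp (X := X) (Y := Y) K with h | ⟨s, h⟩ <;>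
    rw [h] <;> simp [mul_def, PS.mul]

theorem pre_psic_nil (c : Multiset Y) : pre (psic c [] : CoprodM X Y) = c := by
  rw [pre, psHom_psic_nil]

theorem suf_psic_nil (c : Multiset Y) : suf (psic c [] : CoprodM X Y) = c := by
  rw [suf, psHom_psic_nil]

theorem pre_psic_concat (c : Multiset Y) (K : List (Blk X Y)) (x : X) (m : Multiset Y) :
    pre (psic c (K ++ [(x, m)]) : CoprodM X Y) = c := by
  rw [pre, psHom_psic_concat]

theorem suf_psic_concat (c : Multiset Y) (K : List (Blk X Y)) (x : X) (m : Multiset Y) :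
    suf (psic c (K ++ [(x, m)]) : CoprodM X Y) = m := by
  rw [suf, psHom_psic_concat]

theorem pre_psic (c : Multiset Y) (L : List (Blk X Y)) :
    pre (psic c L : CoprodM X Y) = c := by
  rcases L.eq_nil_or_concat with rfl | ⟨K, ⟨x, m⟩, rfl⟩
  · exact pre_psic_nil c
  · rw [List.concat_eq_append]; exact pre_psic_concat c K x m

theorem isPure_psic_nil (c : Multiset Y) : IsPure (psic c [] : CoprodM X Y) := by
  rw [← pureElt_psic]
  exact ⟨ofList c.toList, rfl⟩

theorem not_isPure_psic_concat (c : Multiset Y) (K : List (Blk X Y)) (x : X) (m : Multiset Y) :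
    ¬ IsPure (psic c (K ++ [(x, m)]) : CoprodM X Y) := by
  rintro ⟨u, hu⟩
  have h1 := psHom_psic_concat c K x m
  rw [← hu] at h1
  have h2 : psHom X Y (yEmb X Y u) = PS.pure (↑u.toList : Multiset Y) := by
    have := psHom_yEmb (X := X) (Y := Y) u.toList
    rwa [ofList_toList] at this
  rw [h2] at h1
  cases h1

theorem isPure_phi_nil {w : CoprodM X Y} (h : (phi w).2 = []) : IsPure w := by
  have := psic_phi w
  rw [h] at this
  rw [← this]
  exact isPure_psic_nil _

theorem concat_inj {α : Type _} {L₁ L₂ : List α} {a b : α} (h : L₁ ++ [a] = L₂ ++ [b]) :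
    L₁ = L₂ ∧ a = b := by
  have h1 := congrArg List.dropLast h
  rw [List.dropLast_concat, List.dropLast_concat] at h1
  have h2 := congrArg List.getLast? h
  rw [List.getLast?_concat, List.getLast?_concat] at h2
  exact ⟨h1, Option.some.inj h2⟩

/-- The classification of factorizations of elements of the special shape. -/
theorem CL {M₀ : List (Blk X Y)} {x₀ : X} {π σ : ℕ} {v w : CoprodM X Y}
    {c e : Multiset Y} {Lτ : List (Blk X Y)}
    (hv : len v = π + (lb M₀ + 1) + σ)
    (h1 : Multiset.card c ≤ π + σ) (h2 : π + σ ≤ Multiset.card c + Multiset.card e)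
    (hm : v * w = psic c (M₀ ++ (x₀, e) :: Lτ)) :
    ∃ e₁ e₂, e = e₁ + e₂ ∧ v = psic c (M₀ ++ [(x₀, e₁)]) ∧ w = psic e₂ Lτ := by
  have hv' := (psic_phi v).symm
  have hw' := (psic_phi w).symm
  rcases hpv : phi v with ⟨c₁, L₁⟩
  rcases hpw : phi w with ⟨c₂, L₂⟩
  rw [hpv] at hv'
  rw [hpw] at hw'
  dsimp only at hv' hw'
  have heq : nmul (c₁, L₁) (c₂, L₂) = (c, M₀ ++ (x₀, e) :: Lτ) := by
    have := congrArg phi hm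
    rwa [phi_mul, phi_psic, hpv, hpw] at this
  have hlenv : len v = Multiset.card c₁ + lb L₁ := by rw [hv', len_psic]
  rcases L₁.eq_nil_or_concat with rfl | ⟨K, ⟨x₁, m₁⟩, rfl⟩
  · -- v is pure: too short
    rw [nmul_nil] at heq
    have hc : c₁ + c₂ = c := congrArg Prod.fst heq
    have hcard : Multiset.card c₁ + Multiset.card c₂ = Multiset.card c := by
      rw [← hc, Multiset.card_add]
    simp only [lb, List.map_nil, List.sum_nil] at hlenv
    omega
  · rw [List.concat_eq_append] at *
    rw [nmul_concat] at heq
    have hc : c₁ = c := congrArg Prod.fst heq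
    have hL : (K ++ [(x₁, m₁ + c₂)]) ++ L₂ = (M₀ ++ [(x₀, e)]) ++ Lτ := by
      have := congrArg Prod.snd heq
      simpa using this
    subst hc
    have hlen1 : len v = Multiset.card c₁ + (lb K + (1 + Multiset.card m₁)) := by
      rw [hv', len_psic, lb_concat]
    rcases List.append_eq_append_iff.mp hL with ⟨a', hA, hB⟩ | ⟨c', hA, hB⟩
    · rcases a'.eq_nil_or_concat with rfl | ⟨A, ⟨xa, ma⟩, rfl⟩
      · rw [List.append_nil] at hA
        obtain ⟨hK, hxm⟩ := concat_inj hA.symm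
        have hx : x₁ = x₀ := congrArg Prod.fst hxm
        have hme : e = m₁ + c₂ := (congrArg Prod.snd hxm).symm
        rw [List.nil_append] at hB
        exact ⟨m₁, c₂, hme, by rw [hv', hK, hx], by rw [hw', hB]⟩
      · rw [List.concat_eq_append, ← List.append_assoc] at hA
        obtain ⟨hK, _⟩ := concat_inj hA
        have hlb : lb (M₀ : List (Blk X Y)) =
            (lb K + (1 + (Multiset.card m₁ + Multiset.card c₂))) + lb A := by
          rw [hK, List.append_assoc, lb_append, lb_append]
          simp [lb, Multiset.card_add]
          ring
        omega
    · rcases c'.eq_nil_or_concat with rfl | ⟨A, ⟨xa, ma⟩, rfl⟩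
      · rw [List.append_nil] at hA
        obtain ⟨hK, hxm⟩ := concat_inj hA
        have hx : x₁ = x₀ := congrArg Prod.fst hxm
        have hme : e = m₁ + c₂ := (congrArg Prod.snd hxm).symm
        rw [List.nil_append] at hB
        exact ⟨m₁, c₂, hme, by rw [hv', hK, hx], by rw [hw', hB]⟩
      · rw [List.concat_eq_append, ← List.append_assoc] at hA
        obtain ⟨hK, _⟩ := concat_inj hA
        have hlb : lb (K : List (Blk X Y)) =
            (lb M₀ + (1 + Multiset.card e)) + lb A := by
          rw [hK, List.append_assoc, lb_append, lb_append]
          simp [lb]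
          ring
        omega

section Alg
open scoped Classical
variable {k : Type} [Field k]

/-- the class polynomial: coefficients of `f` on the words `c · M₀x₀d`, indexed by `d`. -/
noncomputable def Acp (M₀ : List (Blk X Y)) (x₀ : X) (f : MonoidAlgebra k (CoprodM X Y))
    (c : Multiset Y) : AddMonoidAlgebra k (Multiset Y) :=
  f.coeff.sum fun v fv =>
    if v = psic c (M₀ ++ [(x₀, suf v)]) then AddMonoidAlgebra.single (suf v) fv else 0

/-- the tail-section polynomial: coefficients of `f` on the words `e · Lτ`, indexed by `e`. -/
noncomputable def Tl (f : MonoidAlgebra k (CoprodM X Y)) (Lτ : List (Blk X Y)) :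
    AddMonoidAlgebra k (Multiset Y) :=
  f.coeff.sum fun w fw => if w = psic (pre w) Lτ then AddMonoidAlgebra.single (pre w) fw else 0

theorem Acp_apply (M₀ : List (Blk X Y)) (x₀ : X) (f : MonoidAlgebra k (CoprodM X Y))
    (c d : Multiset Y) : (Acp M₀ x₀ f c).coeff d = f.coeff (psic c (M₀ ++ [(x₀, d)])) := by
  rw [Acp, AddMonoidAlgebra.coeff_finsuppSum, Finsupp.sum_apply]
  have step : f.coeff.sum (fun v fv =>
      (if v = psic c (M₀ ++ [(x₀, suf v)]) then AddMonoidAlgebra.single (suf v) fv else 0).coeff d) =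
      f.coeff.sum fun v fv => if v = psic c (M₀ ++ [(x₀, d)]) then fv else 0 := by
    apply Finsupp.sum_congr
    intro v _
    by_cases h : v = psic c (M₀ ++ [(x₀, suf v)])
    · rw [if_pos h, AddMonoidAlgebra.coeff_single_apply]
      apply if_congr _ rfl rfl
      constructor
      · intro hsd; rw [← hsd]; exact h
      · intro hv; rw [hv]; exact suf_psic_concat c M₀ x₀ d
    · rw [if_neg h, if_neg, AddMonoidAlgebra.coeff_zero, Finsupp.coe_zero, Pi.zero_apply]
      intro hv
      apply h
      have : suf v = d := by rw [hv]; exact suf_psic_concat c M₀ x₀ d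
      rw [this, ← hv]
  rw [step, Finsupp.sum_ite_eq' f.coeff (psic c (M₀ ++ [(x₀, d)])) fun _ fv => fv]
  split_ifs with h
  · rfl
  · exact (Finsupp.notMem_support_iff.mp h).symm

theorem Tl_apply (f : MonoidAlgebra k (CoprodM X Y)) (Lτ : List (Blk X Y)) (e : Multiset Y) :
    (Tl f Lτ).coeff e = f.coeff (psic e Lτ) := by
  rw [Tl, AddMonoidAlgebra.coeff_finsuppSum, Finsupp.sum_apply]
  have step : f.coeff.sum (fun w fw =>
      (if w = psic (pre w) Lτ then AddMonoidAlgebra.single (pre w) fw else 0).coeff e) =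
      f.coeff.sum fun w fw => if w = psic e Lτ then fw else 0 := by
    apply Finsupp.sum_congr
    intro w _
    by_cases h : w = psic (pre w) Lτ
    · rw [if_pos h, AddMonoidAlgebra.coeff_single_apply]
      apply if_congr _ rfl rfl
      constructor
      · intro hse; rw [← hse]; exact h
      · intro hw; rw [hw]; exact pre_psic e Lτ
    · rw [if_neg h, if_neg, AddMonoidAlgebra.coeff_zero, Finsupp.coe_zero, Pi.zero_apply]
      intro hw
      apply h
      have : pre w = e := by rw [hw]; exact pre_psic e Lτ
      rw [this, ← hw]
  rw [step, Finsupp.sum_ite_eq' f.coeff (psic e Lτ) fun _ fw => fw]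
  split_ifs with h
  · rfl
  · exact (Finsupp.notMem_support_iff.mp h).symm

theorem nzd {A B : AddMonoidAlgebra k (Multiset Y)} (h : A * B = 0) : A = 0 ∨ B = 0 := by
  set Θ := AddMonoidAlgebra.mapDomainRingHom k (Multiset.toFinsupp (α := Y)).toAddMonoidHom with hΘ
  have hinj : Function.Injective Θ := by
    intro x y hxy
    exact AddMonoidAlgebra.mapDomain_injective Multiset.toFinsupp.injective hxy
  have h2 : Θ A * Θ B = 0 := by rw [← map_mul, h, map_zero]
  rcases mul_eq_zero.mp h2 with h3 | h3
  · left; exact hinj (by rw [h3, map_zero])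
  · right; exact hinj (by rw [h3, map_zero])

end Alg

section Alg2
open scoped Classical
variable {k : Type} [Field k]

theorem CONV {M₀ : List (Blk X Y)} {x₀ : X} {π σ n : ℕ}
    (hn : n = π + (lb M₀ + 1) + σ)
    (f g : MonoidAlgebra k (CoprodM X Y)) (hf : ∀ v ∈ f.coeff.support, len v = n)
    (c e : Multiset Y) (Lτ : List (Blk X Y))
    (h1 : Multiset.card c ≤ π + σ) (h2 : π + σ ≤ Multiset.card c + Multiset.card e) :
    (Acp M₀ x₀ f c * Tl g Lτ).coeff e = (f * g).coeff (psic c (M₀ ++ (x₀, e) :: Lτ)) := by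
  conv_rhs => rw [MonoidAlgebra.coeff_mul]
  rw [Acp, Tl, Finsupp.sum_mul]
  simp only [Finsupp.mul_sum]
  rw [AddMonoidAlgebra.coeff_finsuppSum, Finsupp.sum_apply]
  apply Finsupp.sum_congr
  intro v hv
  rw [AddMonoidAlgebra.coeff_finsuppSum, Finsupp.sum_apply]
  apply Finsupp.sum_congr
  intro w _
  have hlenv : len v = π + (lb M₀ + 1) + σ := by rw [hf v hv, hn]
  by_cases hP1 : v = psic c (M₀ ++ [(x₀, suf v)]) <;>
    by_cases hP2 : w = psic (pre w) Lτ
  · rw [if_pos hP1, if_pos hP2]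
    have hs : (AddMonoidAlgebra.single (suf v) (f.coeff v) * AddMonoidAlgebra.single (pre w) (g.coeff w) :
        AddMonoidAlgebra k (Multiset Y)) = AddMonoidAlgebra.single (suf v + pre w) (f.coeff v * g.coeff w) :=
      AddMonoidAlgebra.single_mul_single _ _ _ _
    rw [hs, AddMonoidAlgebra.coeff_single_apply]
    apply if_congr _ rfl rfl
    constructor
    · intro hsum
      rw [hP1, hP2, psic_concat_mul, hsum]
    · intro hmul
      obtain ⟨e₁, e₂, he, hve, hwe⟩ := CL hlenv h1 h2 hmul
      rw [hve, suf_psic_concat, hwe, pre_psic, he]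
  · rw [if_pos hP1, if_neg hP2, mul_zero, AddMonoidAlgebra.coeff_zero, Finsupp.coe_zero, Pi.zero_apply, if_neg]
    intro hmul
    obtain ⟨e₁, e₂, he, hve, hwe⟩ := CL hlenv h1 h2 hmul
    exact hP2 (by rw [hwe, pre_psic])
  · rw [if_neg hP1, if_pos hP2, zero_mul, AddMonoidAlgebra.coeff_zero, Finsupp.coe_zero, Pi.zero_apply, if_neg]
    intro hmul
    obtain ⟨e₁, e₂, he, hve, hwe⟩ := CL hlenv h1 h2 hmul
    refine hP1 ?_
    have hsv : suf v = e₁ := by rw [hve]; exact suf_psic_concat _ _ _ _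
    rw [hsv]
    exact hve
  · rw [if_neg hP1, if_neg hP2, zero_mul, AddMonoidAlgebra.coeff_zero, Finsupp.coe_zero, Pi.zero_apply, if_neg]
    intro hmul
    obtain ⟨e₁, e₂, he, hve, hwe⟩ := CL hlenv h1 h2 hmul
    exact hP2 (by rw [hwe, pre_psic])

theorem IDrel {M₀ : List (Blk X Y)} {x₀ : X} {π σ n : ℕ}
    (hn : n = π + (lb M₀ + 1) + σ)
    (a b : MonoidAlgebra k (CoprodM X Y)) (hcomm : a * b = b * a)
    (ha : ∀ v ∈ a.coeff.support, len v = n) (hb : ∀ w ∈ b.coeff.support, len w = n)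
    (c : Multiset Y) (Lτ : List (Blk X Y)) :
    Acp M₀ x₀ a c * Tl b Lτ = Acp M₀ x₀ b c * Tl a Lτ := by
  have hzero : ∀ f : MonoidAlgebra k (CoprodM X Y), (∀ v ∈ f.coeff.support, len v = n) →
      ¬ Multiset.card c ≤ π + σ → Acp M₀ x₀ f c = 0 := by
    intro f hf hc
    apply AddMonoidAlgebra.ext
    apply Finsupp.ext
    intro d
    rw [Acp_apply, AddMonoidAlgebra.coeff_zero, Finsupp.coe_zero, Pi.zero_apply]
    by_contra hne
    have hmem : psic c (M₀ ++ [(x₀, d)]) ∈ f.coeff.support := Finsupp.mem_support_iff.mpr hne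
    have := hf _ hmem
    rw [len_psic, lb_concat] at this
    omega
  by_cases h1 : Multiset.card c ≤ π + σ
  · apply AddMonoidAlgebra.ext
    apply Finsupp.ext
    intro e
    by_cases h2 : π + σ ≤ Multiset.card c + Multiset.card e
    · rw [CONV hn a b ha c e Lτ h1 h2, CONV hn b a hb c e Lτ h1 h2, hcomm]
    · have hzc : ∀ f g : MonoidAlgebra k (CoprodM X Y), (∀ v ∈ f.coeff.support, len v = n) →
          (Acp M₀ x₀ f c * Tl g Lτ).coeff e = 0 := by
        intro f g hf
        rw [AddMonoidAlgebra.coeff_mul, Finsupp.sum]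
        apply Finset.sum_eq_zero
        intro d hd
        rw [Finsupp.sum]
        apply Finset.sum_eq_zero
        intro e₂ _
        rw [if_neg]
        intro hsum
        have hdmem : f.coeff (psic c (M₀ ++ [(x₀, d)])) ≠ 0 := by
          rw [← Acp_apply (k := k) M₀ x₀ f c d]
          exact Finsupp.mem_support_iff.mp hd
        have hlen := hf _ (Finsupp.mem_support_iff.mpr hdmem)
        rw [len_psic, lb_concat] at hlen
        have hcard : Multiset.card d + Multiset.card e₂ = Multiset.card e := by
          rw [← hsum, Multiset.card_add]
        omega
      rw [hzc a b ha, hzc b a hb]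
  · rw [hzero a ha h1, hzero b hb h1, zero_mul, zero_mul]

end Alg2

theorem decomp (c d : Multiset Y) (M₀ : List (Blk X Y)) (x₀ : X) :
    (pureElt c : CoprodM X Y) * psic 0 (M₀ ++ [(x₀, 0)]) * pureElt d =
      psic c (M₀ ++ [(x₀, d)]) := by
  rw [pureElt_psic, pureElt_psic, psic_nil_mul, add_zero, psic_concat_mul, zero_add]

theorem sim_char {p₀ s₀ : Multiset Y} {M₀ : List (Blk X Y)} {x₀ : X}
    {v₀ : CoprodM X Y} (hdec : v₀ = psic p₀ (M₀ ++ [(x₀, s₀)])) (v : CoprodM X Y) :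
    Sim v v₀ ↔ ∃ c d : Multiset Y, Multiset.card c = Multiset.card p₀ ∧
      Multiset.card d = Multiset.card s₀ ∧ v = psic c (M₀ ++ [(x₀, d)]) := by
  have hnp₀ : ¬ IsPure v₀ := by rw [hdec]; exact not_isPure_psic_concat _ _ _ _
  have hpre₀ : pre v₀ = p₀ := by rw [hdec]; exact pre_psic_concat _ _ _ _
  have hsuf₀ : suf v₀ = s₀ := by rw [hdec]; exact suf_psic_concat _ _ _ _
  constructor
  · rintro ⟨hlen, ⟨hp, hp₀⟩ | ⟨hnp1, hnp2, hc1, hc2, m, hu, hv₀'⟩⟩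
    · exact absurd hp₀ hnp₀
    · rw [hpre₀, hsuf₀] at hv₀'
      have hm' : m = psic (phi m).1 (phi m).2 := (psic_phi m).symm
      rcases hmL : (phi m).2 with _ | _
      case nil =>
        exfalso
        rw [hmL] at hm'
        rw [hm', pureElt_psic, pureElt_psic, psic_nil_mul, psic_nil_mul] at hv₀'
        rw [hdec] at hv₀'
        obtain ⟨_, hLL⟩ := psic_injective hv₀'
        simp at hLL
      case cons p t =>
        rcases (p :: t).eq_nil_or_concat with habs | ⟨K, ⟨xm, mm⟩, hKm⟩
        · exact absurd habs (List.cons_ne_nil p t)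
        rw [List.concat_eq_append] at hKm
        rw [hmL, hKm] at hm'
        rw [hm', pureElt_psic, pureElt_psic, psic_nil_mul, psic_concat_mul] at hv₀'
        rw [hdec] at hv₀'
        obtain ⟨hcc, hLL⟩ := psic_injective hv₀'
        have hcm : (phi m).1 = 0 := by
          have : p₀ + (phi m).1 = p₀ + 0 := by rw [add_zero]; exact hcc.symm
          exact add_left_cancel this
        have hLL' : K ++ [(xm, mm + s₀)] = M₀ ++ [(x₀, s₀)] := hLL.symm
        obtain ⟨hK, hxm⟩ := concat_inj hLL'
        have hx : xm = x₀ := congrArg Prod.fst hxm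
        have hmm : mm = 0 := by
          have h2 : mm + s₀ = 0 + s₀ := by rw [zero_add]; exact congrArg Prod.snd hxm
          exact add_right_cancel h2
        have hmfinal : m = psic 0 (M₀ ++ [(x₀, 0)]) := by
          rw [hm', hcm, hK, hx, hmm]
        refine ⟨pre v, suf v, ?_, ?_, ?_⟩
        · rw [hc1, hpre₀]
        · rw [hc2, hsuf₀]
        · calc v = pureElt (pre v) * m * pureElt (suf v) := hu
            _ = psic (pre v) (M₀ ++ [(x₀, suf v)]) := by rw [hmfinal, decomp]
  · rintro ⟨c, d, hcc, hcd, hveq⟩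
    have hprev : pre v = c := by rw [hveq]; exact pre_psic_concat _ _ _ _
    have hsufv : suf v = d := by rw [hveq]; exact suf_psic_concat _ _ _ _
    refine ⟨?_, Or.inr ⟨?_, hnp₀, ?_, ?_, psic 0 (M₀ ++ [(x₀, 0)]), ?_, ?_⟩⟩
    · rw [hveq, hdec, len_psic, len_psic, lb_concat, lb_concat]
      omega
    · rw [hveq]; exact not_isPure_psic_concat _ _ _ _
    · rw [hprev, hpre₀, hcc]
    · rw [hsufv, hsuf₀, hcd]
    · rw [hprev, hsufv, decomp]; exact hveq
    · rw [hpre₀, hsuf₀, decomp]; exact hdec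

section Alg3
open scoped Classical
variable {k : Type} [Field k]

theorem Acp_ne_zero_iff (M₀ : List (Blk X Y)) (x₀ : X) (f : MonoidAlgebra k (CoprodM X Y))
    (c : Multiset Y) : Acp M₀ x₀ f c ≠ 0 ↔ ∃ d, f.coeff (psic c (M₀ ++ [(x₀, d)])) ≠ 0 := by
  constructor
  · intro h
    by_contra hall
    push_neg at hall
    exact h (AddMonoidAlgebra.ext (Finsupp.ext fun d => by
      rw [Acp_apply, AddMonoidAlgebra.coeff_zero, Finsupp.coe_zero, Pi.zero_apply]; exact hall d))
  · rintro ⟨d, hd⟩ h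
    apply hd
    rw [← Acp_apply (k := k) M₀ x₀ f c d, h, AddMonoidAlgebra.coeff_zero, Finsupp.coe_zero, Pi.zero_apply]

theorem Tl_ne_zero_iff (f : MonoidAlgebra k (CoprodM X Y)) (Lτ : List (Blk X Y)) :
    Tl f Lτ ≠ 0 ↔ ∃ e, f.coeff (psic e Lτ) ≠ 0 := by
  constructor
  · intro h
    by_contra hall
    push_neg at hall
    exact h (AddMonoidAlgebra.ext (Finsupp.ext fun e => by
      rw [Tl_apply, AddMonoidAlgebra.coeff_zero, Finsupp.coe_zero, Pi.zero_apply]; exact hall e))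
  · rintro ⟨e, he⟩ h
    apply he
    rw [← Tl_apply (k := k) f Lτ e, h, AddMonoidAlgebra.coeff_zero, Finsupp.coe_zero, Pi.zero_apply]

end Alg3

end L41

open L41 in
/-- Lemma 4.1: for commuting homogeneous elements of equal total degree and a
non-pure `v₀ ∈ supp a`, the classes `supp a ∩ [v₀]` and `supp b ∩ [v₀]` are
nonempty and have the same sets of prefixes and of suffixes. -/
theorem coprod_commuting_homogeneous_prefixes {X Y k : Type} [Field k]
    (a b : MonoidAlgebra k (CoprodM X Y)) (n : ℕ)
    (hcomm : a * b = b * a) (ha0 : a ≠ 0) (hb0 : b ≠ 0)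
    (ha : ∀ w ∈ a.coeff.support, len w = n) (hb : ∀ w ∈ b.coeff.support, len w = n)
    (v₀ : CoprodM X Y) (hv₀ : v₀ ∈ a.coeff.support) (hnp : ¬ IsPure v₀) :
    (∃ v ∈ a.coeff.support, Sim v v₀) ∧ (∃ w ∈ b.coeff.support, Sim w v₀) ∧
      (∀ c : Multiset Y,
        (∃ v ∈ a.coeff.support, Sim v v₀ ∧ pre v = c) ↔
          (∃ w ∈ b.coeff.support, Sim w v₀ ∧ pre w = c)) ∧
      (∀ c : Multiset Y,
        (∃ v ∈ a.coeff.support, Sim v v₀ ∧ suf v = c) ↔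
          (∃ w ∈ b.coeff.support, Sim w v₀ ∧ suf w = c)) := by
  
  classical
  rcases hpv : phi v₀ with ⟨p₀, L₀⟩
  rcases L₀.eq_nil_or_concat with rfl | ⟨M₀, ⟨x₀, s₀⟩, rfl⟩
  · refine absurd (isPure_phi_nil ?_) hnp
    rw [hpv]
  have hdec : v₀ = psic p₀ (M₀ ++ [(x₀, s₀)]) := by
    rw [← psic_phi v₀, hpv]
    dsimp only
    rw [List.concat_eq_append]
  have hn : n = Multiset.card p₀ + (lb M₀ + 1) + Multiset.card s₀ := by
    have h := ha v₀ hv₀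
    rw [hdec, len_psic, lb_concat] at h
    omega
  have hchar := sim_char hdec
  have hav : a.coeff v₀ ≠ 0 := Finsupp.mem_support_iff.mp hv₀
  have hAa : Acp M₀ x₀ a p₀ ≠ 0 := (Acp_ne_zero_iff _ _ _ _).mpr
    ⟨s₀, by rw [← hdec]; exact hav⟩
  have hTa : Tl a (M₀ ++ [(x₀, s₀)]) ≠ 0 := (Tl_ne_zero_iff _ _).mpr
    ⟨p₀, by rw [← hdec]; exact hav⟩
  have id := fun (c : Multiset Y) (Lτ : List (Blk X Y)) => IDrel (x₀ := x₀) hn a b hcomm ha hb c Lτ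
  have simv₀ : Sim v₀ v₀ := (hchar v₀).mpr ⟨p₀, s₀, rfl, rfl, hdec⟩
  have cardP : ∀ {c d : Multiset Y} {f : MonoidAlgebra k (CoprodM X Y)},
      (∀ w ∈ f.coeff.support, len w = n) → f.coeff (psic c (M₀ ++ [(x₀, d)])) ≠ 0 →
      Multiset.card c + Multiset.card d = Multiset.card p₀ + Multiset.card s₀ := by
    intro c d f hf hne
    have h := hf _ (Finsupp.mem_support_iff.mpr hne)
    rw [len_psic, lb_concat] at h
    omega
  have hbnon : ∃ w ∈ b.coeff.support, Sim w v₀ := by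
    by_contra hcon2
    push_neg at hcon2
    have hAb0 : Acp M₀ x₀ b p₀ = 0 := by
      by_contra h0
      obtain ⟨d, hd⟩ := (Acp_ne_zero_iff M₀ x₀ b p₀).mp h0
      have hcd := cardP hb hd
      exact hcon2 _ (Finsupp.mem_support_iff.mpr hd)
        ((hchar _).mpr ⟨p₀, d, rfl, by omega, rfl⟩)
    obtain ⟨w₀, hw₀⟩ := Finsupp.support_nonempty_iff.mpr (mt MonoidAlgebra.coeff_eq_zero.mp hb0)
    have hid := id p₀ (phi w₀).2
    rw [hAb0, zero_mul] at hid
    rcases nzd hid with h | h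
    · exact hAa h
    · exact ((Tl_ne_zero_iff b (phi w₀).2).mpr
        ⟨(phi w₀).1, by rw [psic_phi]; exact Finsupp.mem_support_iff.mp hw₀⟩) h
  have hprefix : ∀ c : Multiset Y, (∃ v ∈ a.coeff.support, Sim v v₀ ∧ pre v = c) ↔
      ∃ w ∈ b.coeff.support, Sim w v₀ ∧ pre w = c := by
    obtain ⟨w₁, hw₁, hsw₁⟩ := hbnon
    obtain ⟨c₁, d₁, hc₁, hd₁, hw₁eq⟩ := (hchar w₁).mp hsw₁
    have hTb1 : Tl b (M₀ ++ [(x₀, d₁)]) ≠ 0 := (Tl_ne_zero_iff _ _).mpr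
      ⟨c₁, by rw [← hw₁eq]; exact Finsupp.mem_support_iff.mp hw₁⟩
    intro c
    constructor
    · rintro ⟨v, hvs, hvsim, hvpre⟩
      obtain ⟨c', d', hc', hd', hveq⟩ := (hchar v).mp hvsim
      have hpc : c' = c := by rw [← hvpre, hveq, pre_psic_concat]
      subst hpc
      have hAac : Acp M₀ x₀ a c' ≠ 0 := (Acp_ne_zero_iff _ _ _ _).mpr
        ⟨d', by rw [← hveq]; exact Finsupp.mem_support_iff.mp hvs⟩
      have hprod : Acp M₀ x₀ a c' * Tl b (M₀ ++ [(x₀, d₁)]) ≠ 0 := fun h =>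
        (nzd h).elim hAac hTb1
      rw [id c' (M₀ ++ [(x₀, d₁)])] at hprod
      have hAbc : Acp M₀ x₀ b c' ≠ 0 := fun h => hprod (by rw [h, zero_mul])
      obtain ⟨d, hd⟩ := (Acp_ne_zero_iff _ _ _ _).mp hAbc
      have hcd := cardP hb hd
      exact ⟨psic c' (M₀ ++ [(x₀, d)]), Finsupp.mem_support_iff.mpr hd,
        (hchar _).mpr ⟨c', d, hc', by omega, rfl⟩, pre_psic_concat _ _ _ _⟩
    · rintro ⟨w, hws, hwsim, hwpre⟩
      obtain ⟨c', d', hc', hd', hweq⟩ := (hchar w).mp hwsim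
      have hpc : c' = c := by rw [← hwpre, hweq, pre_psic_concat]
      subst hpc
      have hAbc : Acp M₀ x₀ b c' ≠ 0 := (Acp_ne_zero_iff _ _ _ _).mpr
        ⟨d', by rw [← hweq]; exact Finsupp.mem_support_iff.mp hws⟩
      have hprod : Acp M₀ x₀ b c' * Tl a (M₀ ++ [(x₀, s₀)]) ≠ 0 := fun h =>
        (nzd h).elim hAbc hTa
      rw [← id c' (M₀ ++ [(x₀, s₀)])] at hprod
      have hAac : Acp M₀ x₀ a c' ≠ 0 := fun h => hprod (by rw [h, zero_mul])
      obtain ⟨d, hd⟩ := (Acp_ne_zero_iff _ _ _ _).mp hAac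
      have hcd := cardP ha hd
      exact ⟨psic c' (M₀ ++ [(x₀, d)]), Finsupp.mem_support_iff.mpr hd,
        (hchar _).mpr ⟨c', d, hc', by omega, rfl⟩, pre_psic_concat _ _ _ _⟩
  have hApb : Acp M₀ x₀ b p₀ ≠ 0 := by
    obtain ⟨w₂, hw₂, hsw₂, hpw₂⟩ := (hprefix p₀).mp
      ⟨v₀, hv₀, simv₀, by rw [hdec]; exact pre_psic_concat _ _ _ _⟩
    obtain ⟨c₂, d₂, hc₂, hd₂, hw₂eq⟩ := (hchar w₂).mp hsw₂
    have hpc : c₂ = p₀ := by rw [← hpw₂, hw₂eq, pre_psic_concat]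
    subst hpc
    exact (Acp_ne_zero_iff _ _ _ _).mpr
      ⟨d₂, by rw [← hw₂eq]; exact Finsupp.mem_support_iff.mp hw₂⟩
  have hsuffix : ∀ d : Multiset Y, (∃ v ∈ a.coeff.support, Sim v v₀ ∧ suf v = d) ↔
      ∃ w ∈ b.coeff.support, Sim w v₀ ∧ suf w = d := by
    intro d
    constructor
    · rintro ⟨v, hvs, hvsim, hvsuf⟩
      obtain ⟨c', d', hc', hd', hveq⟩ := (hchar v).mp hvsim
      have hdd : d' = d := by rw [← hvsuf, hveq, suf_psic_concat]
      subst hdd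
      have hTad : Tl a (M₀ ++ [(x₀, d')]) ≠ 0 := (Tl_ne_zero_iff _ _).mpr
        ⟨c', by rw [← hveq]; exact Finsupp.mem_support_iff.mp hvs⟩
      have hprod : Acp M₀ x₀ b p₀ * Tl a (M₀ ++ [(x₀, d')]) ≠ 0 := fun h =>
        (nzd h).elim hApb hTad
      rw [← id p₀ (M₀ ++ [(x₀, d')])] at hprod
      have hTbd : Tl b (M₀ ++ [(x₀, d')]) ≠ 0 := fun h => hprod (by rw [h, mul_zero])
      obtain ⟨c₂, hc₂⟩ := (Tl_ne_zero_iff _ _).mp hTbd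
      have hcd := cardP hb hc₂
      exact ⟨psic c₂ (M₀ ++ [(x₀, d')]), Finsupp.mem_support_iff.mpr hc₂,
        (hchar _).mpr ⟨c₂, d', by omega, hd', rfl⟩, suf_psic_concat _ _ _ _⟩
    · rintro ⟨w, hws, hwsim, hwsuf⟩
      obtain ⟨c', d', hc', hd', hweq⟩ := (hchar w).mp hwsim
      have hdd : d' = d := by rw [← hwsuf, hweq, suf_psic_concat]
      subst hdd
      have hTbd : Tl b (M₀ ++ [(x₀, d')]) ≠ 0 := (Tl_ne_zero_iff _ _).mpr
        ⟨c', by rw [← hweq]; exact Finsupp.mem_support_iff.mp hws⟩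
      have hprod : Acp M₀ x₀ a p₀ * Tl b (M₀ ++ [(x₀, d')]) ≠ 0 := fun h =>
        (nzd h).elim hAa hTbd
      rw [id p₀ (M₀ ++ [(x₀, d')])] at hprod
      have hTad : Tl a (M₀ ++ [(x₀, d')]) ≠ 0 := fun h => hprod (by rw [h, mul_zero])
      obtain ⟨c₂, hc₂⟩ := (Tl_ne_zero_iff _ _).mp hTad
      have hcd := cardP ha hc₂
      exact ⟨psic c₂ (M₀ ++ [(x₀, d')]), Finsupp.mem_support_iff.mpr hc₂,
        (hchar _).mpr ⟨c₂, d', by omega, hd', rfl⟩, suf_psic_concat _ _ _ _⟩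
  exact ⟨⟨v₀, hv₀, simv₀⟩, hbnon, hprefix, hsuffix⟩
end

section
/- Let a, b ∈ R = k⟨X⟩ * k[Y] be commuting elements of equal total degree n. If at least one of a, b is not top-pure (its degree-n homogeneous component involves an X-variable), then there exists λ ∈ k with ā = λ·b̄, where ā, b̄ are the leading terms in the associated graded algebra (Gr R)_n. -/
namespace L42

variable {X Y : Type}

/-- weight of a finsupp exponent -/
noncomputable def wt (c : Y →₀ ℕ) : ℕ := Multiset.card (Finsupp.toMultiset c)

lemma wt_add (c d : Y →₀ ℕ) : wt (c + d) = wt c + wt d := by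
  simp [wt, map_add]

lemma wt_zero : wt (0 : Y →₀ ℕ) = 0 := by simp [wt]

lemma wt_single (y : Y) : wt (Finsupp.single y 1) = 1 := by
  simp [wt, Finsupp.toMultiset_single]

/-- middles: `x₀ c₁ x₁ c₂ x₂ ...` -/
abbrev Mid (X Y : Type) := X × List ((Y →₀ ℕ) × X)

noncomputable def mwt (m : Mid X Y) : ℕ := 1 + (m.2.map fun p => wt p.1 + 1).sum

lemma mwt_pos (m : Mid X Y) : 1 ≤ mwt m := by simp [mwt]

def mcat (m : Mid X Y) (z : Y →₀ ℕ) (m' : Mid X Y) : Mid X Y :=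
  (m.1, m.2 ++ (z, m'.1) :: m'.2)

lemma mwt_mcat (m m' : Mid X Y) (z : Y →₀ ℕ) :
    mwt (mcat m z m') = mwt m + wt z + mwt m' := by
  simp [mwt, mcat]; ring

inductive NF (X Y : Type) where
  | pure (c : Y →₀ ℕ)
  | mixed (c : Y →₀ ℕ) (m : Mid X Y) (d : Y →₀ ℕ)
  deriving DecidableEq

namespace NF

noncomputable def mul : NF X Y → NF X Y → NF X Y
  | .pure c, .pure d => .pure (c + d)
  | .pure c, .mixed p m s => .mixed (c + p) m s
  | .mixed p m s, .pure d => .mixed p m (s + d)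
  | .mixed p m s, .mixed p' m' s' => .mixed p (mcat m (s + p') m') s'

noncomputable instance : Mul (NF X Y) := ⟨mul⟩
instance : One (NF X Y) := ⟨.pure 0⟩

lemma pure_mul_pure (c d : Y →₀ ℕ) : (pure c : NF X Y) * pure d = pure (c + d) := rfl
lemma pure_mul_mixed (c p : Y →₀ ℕ) (m : Mid X Y) (s : Y →₀ ℕ) :
    (pure c : NF X Y) * mixed p m s = mixed (c + p) m s := rfl
lemma mixed_mul_pure (p : Y →₀ ℕ) (m : Mid X Y) (s d : Y →₀ ℕ) :
    (mixed p m s : NF X Y) * pure d = mixed p m (s + d) := rfl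
lemma mixed_mul_mixed (p : Y →₀ ℕ) (m : Mid X Y) (s p' : Y →₀ ℕ) (m' : Mid X Y) (s' : Y →₀ ℕ) :
    (mixed p m s : NF X Y) * mixed p' m' s' = mixed p (mcat m (s + p') m') s' := rfl

lemma one_def : (1 : NF X Y) = pure 0 := rfl

noncomputable instance : Monoid (NF X Y) where
  mul_assoc a b c := by
    rcases a <;> rcases b <;> rcases c <;>
      simp only [pure_mul_pure, pure_mul_mixed, mixed_mul_pure, mixed_mul_mixed,
        mcat, add_assoc, List.append_assoc, List.cons_append] <;> rfl
  one_mul a := by rcases a <;> simp [one_def, pure_mul_pure, pure_mul_mixed]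
  mul_one a := by rcases a <;> simp [one_def, pure_mul_pure, mixed_mul_pure]

noncomputable def len : NF X Y → ℕ
  | .pure c => wt c
  | .mixed c m d => wt c + mwt m + wt d

lemma len_pure (c : Y →₀ ℕ) : len (pure c : NF X Y) = wt c := rfl
lemma len_mixed (c : Y →₀ ℕ) (m : Mid X Y) (d : Y →₀ ℕ) :
    len (mixed c m d : NF X Y) = wt c + mwt m + wt d := rfl

lemma len_mul (a b : NF X Y) : len (a * b) = len a + len b := by
  rcases a <;> rcases b <;>
    simp only [pure_mul_pure, pure_mul_mixed, mixed_mul_pure, mixed_mul_mixed,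
      len, wt_add, mwt_mcat] <;> ring

end NF

noncomputable def gen : X ⊕ Y → NF X Y
  | Sum.inl x => .mixed 0 (x, []) 0
  | Sum.inr y => .pure (Finsupp.single y 1)

noncomputable def nfHom (X Y : Type) : CoprodM X Y →* NF X Y :=
  Con.lift _ (FreeMonoid.lift gen) (by
    refine Con.conGen_le.2 ?_
    rintro a b ⟨u, v, y₁, y₂, rfl, rfl⟩
    have key : (gen (Sum.inr y₁) : NF X Y) * gen (Sum.inr y₂)
        = gen (Sum.inr y₂) * gen (Sum.inr y₁) := by
      simp [gen, NF.pure_mul_pure, add_comm]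
    simp only [Con.ker_rel, map_mul, FreeMonoid.lift_eval_of]
    rw [mul_assoc ((FreeMonoid.lift gen) u) (gen (Sum.inr y₁)) (gen (Sum.inr y₂)), key,
      ← mul_assoc])

def mk (X Y : Type) : FM X Y →* CoprodM X Y := Con.mk' (coCon X Y)

lemma nfHom_mk (l : FM X Y) : nfHom X Y (mk X Y l) = FreeMonoid.lift gen l := rfl

lemma yEmb_perm {l l' : List Y} (h : l.Perm l') :
    yEmb X Y (FreeMonoid.ofList l) = yEmb X Y (FreeMonoid.ofList l') := by
  induction h with
  | nil => rfl
  | cons y p ih => simp only [FreeMonoid.ofList_cons, map_mul]; rw [ih]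
  | swap x y l =>
      have hrel : (coCon X Y) (FreeMonoid.map Sum.inr (FreeMonoid.ofList (y :: x :: l)))
          (FreeMonoid.map Sum.inr (FreeMonoid.ofList (x :: y :: l))) := by
        apply ConGen.Rel.of
        refine ⟨1, FreeMonoid.map Sum.inr (FreeMonoid.ofList l), y, x, ?_, ?_⟩ <;>
          simp [FreeMonoid.ofList_cons, map_mul, mul_assoc]
      exact (Con.eq _).2 hrel
  | trans _ _ ih1 ih2 => exact ih1.trans ih2

noncomputable def pe (c : Y →₀ ℕ) : CoprodM X Y :=
  yEmb X Y (FreeMonoid.ofList c.toMultiset.toList)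

lemma pe_zero : (pe 0 : CoprodM X Y) = 1 := by
  have h : (Finsupp.toMultiset (0 : Y →₀ ℕ)) = 0 := by simp
  rw [pe, h, Multiset.toList_zero]
  exact map_one _

lemma pe_add (c d : Y →₀ ℕ) : (pe (c + d) : CoprodM X Y) = pe c * pe d := by
  have hperm : (Finsupp.toMultiset (c + d)).toList.Perm
      (c.toMultiset.toList ++ d.toMultiset.toList) := by
    rw [← Multiset.coe_eq_coe, Multiset.coe_toList, ← Multiset.coe_add,
      Multiset.coe_toList, Multiset.coe_toList, map_add]
  rw [pe, yEmb_perm hperm, FreeMonoid.ofList_append, map_mul]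
  rfl

lemma pe_single (y : Y) :
    (pe (Finsupp.single y 1) : CoprodM X Y) = mk X Y (FreeMonoid.of (Sum.inr y)) := by
  have hperm : (Finsupp.single y 1 : Y →₀ ℕ).toMultiset.toList.Perm [y] := by
    rw [← Multiset.coe_eq_coe, Multiset.coe_toList, Finsupp.toMultiset_single]
    simp
  rw [pe, yEmb_perm hperm]
  rfl

noncomputable def midElt (m : Mid X Y) : CoprodM X Y :=
  mk X Y (FreeMonoid.of (Sum.inl m.1)) *
    (m.2.map fun p => (pe p.1 : CoprodM X Y) * mk X Y (FreeMonoid.of (Sum.inl p.2))).prod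

noncomputable def nfInv : NF X Y → CoprodM X Y
  | .pure c => pe c
  | .mixed c m d => pe c * midElt m * pe d

lemma nfInv_gen_mul (a : X ⊕ Y) (W : NF X Y) :
    nfInv (gen a * W) = mk X Y (FreeMonoid.of a) * nfInv W := by
  rcases a with x | y <;> rcases W with c | ⟨c, m, d⟩
  · show nfInv (NF.mixed 0 (x, []) (0 + c)) = _
    simp [nfInv, midElt, pe_zero, pe_add, mul_assoc]
  · show nfInv (NF.mixed 0 (mcat (x, []) (0 + c) m) d) = _
    simp only [nfInv, midElt, mcat, pe_zero, one_mul, zero_add, List.nil_append,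
      List.map_cons, List.prod_cons]
    simp [mul_assoc]
  · show nfInv (NF.pure (Finsupp.single y 1 + c)) = _
    simp [nfInv, pe_add, pe_single]
  · show nfInv (NF.mixed (Finsupp.single y 1 + c) m d) = _
    simp [nfInv, pe_add, pe_single, mul_assoc]

lemma nfInv_nfHom (w : CoprodM X Y) : nfInv (nfHom X Y w) = w := by
  induction w using Con.induction_on with
  | _ l =>
    show nfInv (nfHom X Y (mk X Y l)) = mk X Y l
    rw [nfHom_mk]
    induction l using FreeMonoid.recOn with
    | one => show nfInv (.pure 0) = 1; simp [nfInv, pe_zero]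
    | of_mul a l ih =>
        rw [map_mul, FreeMonoid.lift_eval_of, nfInv_gen_mul, ih, map_mul]

lemma nfHom_yEmb_list [DecidableEq Y] (l : List Y) :
    nfHom X Y (yEmb X Y (FreeMonoid.ofList l)) = NF.pure (Multiset.toFinsupp (l : Multiset Y)) := by
  classical
  induction l with
  | nil =>
      rw [show FreeMonoid.ofList ([] : List Y) = 1 from rfl, map_one, map_one]
      simp [NF.one_def]
  | cons y t ih =>
      rw [FreeMonoid.ofList_cons, map_mul, map_mul]
      have h1 : nfHom X Y (yEmb X Y (FreeMonoid.of y)) = NF.pure (Finsupp.single y 1) := rfl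
      rw [h1, ih, NF.pure_mul_pure]
      congr 1
      have : (↑(y :: t) : Multiset Y) = {y} + ↑t := by
        rw [← Multiset.cons_coe]; rfl
      rw [this, map_add, Multiset.toFinsupp_singleton]

lemma nfHom_pe (c : Y →₀ ℕ) : nfHom X Y (pe c : CoprodM X Y) = .pure c := by
  classical
  rw [pe, nfHom_yEmb_list, Multiset.coe_toList, Finsupp.toMultiset_toFinsupp]

lemma nfHom_mid_aux (l : List ((Y →₀ ℕ) × X)) (x : X) :
    nfHom X Y (mk X Y (FreeMonoid.of (Sum.inl x)) *
      (l.map fun p => (pe p.1 : CoprodM X Y) * mk X Y (FreeMonoid.of (Sum.inl p.2))).prod)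
      = NF.mixed 0 (x, l) 0 := by
  induction l generalizing x with
  | nil =>
      simp only [List.map_nil, List.prod_nil, mul_one]
      rfl
  | cons p t ih =>
      rw [List.map_cons, List.prod_cons]
      have hre : mk X Y (FreeMonoid.of (Sum.inl x)) *
          ((pe p.1 * mk X Y (FreeMonoid.of (Sum.inl p.2))) *
            (t.map fun p => (pe p.1 : CoprodM X Y) * mk X Y (FreeMonoid.of (Sum.inl p.2))).prod)
          = (mk X Y (FreeMonoid.of (Sum.inl x)) * pe p.1) *
            (mk X Y (FreeMonoid.of (Sum.inl p.2)) *
              (t.map fun p => (pe p.1 : CoprodM X Y) * mk X Y (FreeMonoid.of (Sum.inl p.2))).prod) := by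
        rw [mul_assoc, ← mul_assoc (pe p.1), ← mul_assoc, ← mul_assoc, mul_assoc ((mk X Y) (FreeMonoid.of (Sum.inl x)) * pe p.1)]
      rw [hre, map_mul, map_mul, ih p.2]
      have hx : nfHom X Y (mk X Y (FreeMonoid.of (Sum.inl x))) = NF.mixed 0 (x, []) 0 := rfl
      rw [hx, nfHom_pe, NF.mixed_mul_pure, NF.mixed_mul_mixed]
      simp [mcat]

lemma nfHom_midElt (m : Mid X Y) : nfHom X Y (midElt m) = .mixed 0 m 0 := by
  rcases m with ⟨x, l⟩
  exact nfHom_mid_aux l x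

lemma nfHom_nfInv (W : NF X Y) : nfHom X Y (nfInv W) = W := by
  rcases W with c | ⟨c, m, d⟩
  · exact nfHom_pe c
  · show nfHom X Y (pe c * midElt m * pe d) = _
    rw [map_mul, map_mul, nfHom_pe, nfHom_pe, nfHom_midElt,
      NF.pure_mul_mixed, NF.mixed_mul_pure]
    simp

noncomputable def nfEquiv (X Y : Type) : CoprodM X Y ≃* NF X Y :=
  { toFun := nfHom X Y
    invFun := nfInv
    left_inv := nfInv_nfHom
    right_inv := nfHom_nfInv
    map_mul' := map_mul _ }

end L42

namespace L42
variable {X Y : Type}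

lemma list_split_cases {γ : Type*} {l₁ l₂ : List γ} {a b : γ} {r₁ r₂ : List γ}
    (h : l₁ ++ a :: r₁ = l₂ ++ b :: r₂) :
    (l₁ = l₂ ∧ a = b ∧ r₁ = r₂) ∨
    (∃ m, l₂ = l₁ ++ a :: m ∧ r₁ = m ++ b :: r₂) ∨
    (∃ m, l₁ = l₂ ++ b :: m ∧ r₂ = m ++ a :: r₁) := by
  induction l₁ generalizing l₂ with
  | nil =>
      cases l₂ with
      | nil => simp_all
      | cons c t =>
          simp only [List.nil_append, List.cons_append, List.cons.injEq] at h
          exact Or.inr (Or.inl ⟨t, by simp [h.1, h.2]⟩)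
  | cons c t ih =>
      cases l₂ with
      | nil =>
          simp only [List.nil_append, List.cons_append, List.cons.injEq] at h
          exact Or.inr (Or.inr ⟨t, by simp [h.1, h.2]⟩)
      | cons c' t' =>
          simp only [List.cons_append, List.cons.injEq] at h
          obtain ⟨rfl, h2⟩ := h
          rcases ih h2 with ⟨rfl, rfl, rfl⟩ | ⟨m, hm1, hm2⟩ | ⟨m, hm1, hm2⟩
          · exact Or.inl ⟨rfl, rfl, rfl⟩
          · exact Or.inr (Or.inl ⟨m, by simp [hm1], hm2⟩)
          · exact Or.inr (Or.inr ⟨m, by simp [hm1], hm2⟩)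

lemma sum_fiber {G : Type*} [Monoid G] {k : Type*} [Semiring k] [DecidableEq G]
    (s t : Finset G) (F : G → G → k) (W : G) {ι : Type*} (P : Finset ι) (L R : ι → G)
    (hinj : ∀ i ∈ P, ∀ j ∈ P, L i = L j → R i = R j → i = j)
    (hcover : ∀ U ∈ s, ∀ V ∈ t, U * V = W → F U V ≠ 0 → ∃ i ∈ P, L i = U ∧ R i = V)
    (hLR : ∀ i ∈ P, L i * R i = W)
    (hzero : ∀ i ∈ P, (L i ∉ s ∨ R i ∉ t) → F (L i) (R i) = 0) :
    (∑ U ∈ s, ∑ V ∈ t, if U * V = W then F U V else 0) = ∑ i ∈ P, F (L i) (R i) := by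
  classical
  rw [← Finset.sum_product']
  have h1 : (∑ p ∈ s ×ˢ t, if p.1 * p.2 = W then F p.1 p.2 else 0)
      = ∑ p ∈ (s ×ˢ t).filter (fun p => p.1 * p.2 = W ∧ F p.1 p.2 ≠ 0), F p.1 p.2 := by
    rw [Finset.sum_filter]
    refine Finset.sum_congr rfl fun p _ => ?_
    by_cases h : p.1 * p.2 = W <;> by_cases h2 : F p.1 p.2 = 0 <;> simp [h, h2]
  have h2 : (∑ i ∈ P, F (L i) (R i))
      = ∑ i ∈ P.filter (fun i => F (L i) (R i) ≠ 0), F (L i) (R i) :=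
    (Finset.sum_filter_ne_zero _).symm
  rw [h1, h2]
  refine (Finset.sum_bij (fun i _ => (L i, R i)) ?_ ?_ ?_ ?_).symm
  · intro i hi
    simp only [Finset.mem_filter] at hi ⊢
    obtain ⟨hiP, hF⟩ := hi
    have hmem : L i ∈ s ∧ R i ∈ t := by
      by_contra hc
      push_neg at hc
      apply hF
      apply hzero i hiP
      by_cases hLs : L i ∈ s
      · exact Or.inr (hc hLs)
      · exact Or.inl hLs
    exact ⟨Finset.mem_product.2 hmem, hLR i hiP, hF⟩
  · intro i hi j hj hij
    simp only [Finset.mem_filter] at hi hj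
    simp only [Prod.mk.injEq] at hij
    exact hinj i hi.1 j hj.1 hij.1 hij.2
  · intro p hp
    simp only [Finset.mem_filter, Finset.mem_product] at hp
    obtain ⟨⟨hs, ht⟩, hW, hF⟩ := hp
    obtain ⟨i, hiP, hLi, hRi⟩ := hcover p.1 hs p.2 ht hW hF
    exact ⟨i, Finset.mem_filter.2 ⟨hiP, by rw [hLi, hRi]; exact hF⟩, Prod.ext hLi hRi⟩
  · intro i hi; rfl

lemma mul_apply_eq {k : Type*} [Semiring k] [DecidableEq (NF X Y)]
    (A B : MonoidAlgebra k (NF X Y)) (W : NF X Y) :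
    (A * B).coeff W = ∑ U ∈ A.coeff.support, ∑ V ∈ B.coeff.support, if U * V = W then A.coeff U * B.coeff V else 0 := by
  rw [MonoidAlgebra.mul_apply]
  rfl

section Shapes
variable {k : Type*} [Semiring k] [DecidableEq Y] (A B : MonoidAlgebra k (NF X Y)) (n : ℕ)

/-- cut inside the run between two middles -/
lemma shapeMM (hA : ∀ U ∈ A.coeff.support, NF.len U ≤ n) (hB : ∀ V ∈ B.coeff.support, NF.len V ≤ n)
    (C : Y →₀ ℕ) (m₁ : Mid X Y) (z : Y →₀ ℕ) (m₂ : Mid X Y) (D : Y →₀ ℕ)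
    (h1 : wt C + mwt m₁ ≤ n) (h2 : mwt m₂ + wt D ≤ n)
    (h3 : wt C + mwt m₁ + wt z + mwt m₂ + wt D = 2 * n) :
    (A * B).coeff (NF.mixed C (mcat m₁ z m₂) D)
      = ∑ p ∈ Finset.HasAntidiagonal.antidiagonal z, A.coeff (NF.mixed C m₁ p.1) * B.coeff (NF.mixed p.2 m₂ D) := by
  classical
  rw [mul_apply_eq]
  refine sum_fiber _ _ _ _ _ _ _ ?_ ?_ ?_ ?_
  · intro i _ j _ hL hR
    simp only [NF.mixed.injEq] at hL hR
    exact Prod.ext hL.2.2 hR.1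
  · intro U hU V hV hUV hF
    have lU : NF.len U ≤ n := hA U hU
    have lV : NF.len V ≤ n := hB V hV
    have hlen : NF.len U + NF.len V = 2 * n := by
      rw [← NF.len_mul, hUV, NF.len_mixed, mwt_mcat]; omega
    rcases U with c' | ⟨c', m', s'⟩ <;> rcases V with c'' | ⟨c'', m'', d''⟩
    · rw [NF.pure_mul_pure] at hUV; exact absurd hUV (by simp)
    · rw [NF.pure_mul_mixed] at hUV
      simp only [NF.mixed.injEq] at hUV
      obtain ⟨hC, hm, hD⟩ := hUV
      have : wt c' ≤ wt C := by rw [← hC, wt_add]; omega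
      have h5 : mwt m₁ ≥ 1 := mwt_pos _
      simp only [NF.len_pure, NF.len_mixed] at hlen lU lV
      omega
    · rw [NF.mixed_mul_pure] at hUV
      simp only [NF.mixed.injEq] at hUV
      obtain ⟨hC, hm, hD⟩ := hUV
      have h5 : mwt m₂ ≥ 1 := mwt_pos _
      have h6 : wt D = wt s' + wt c'' := by rw [← hD, wt_add]
      have h7 : mwt m' = mwt (mcat m₁ z m₂) := by rw [hm]
      rw [mwt_mcat] at h7
      simp only [NF.len_pure, NF.len_mixed] at hlen lU lV
      omega
    · rw [NF.mixed_mul_mixed] at hUV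
      simp only [NF.mixed.injEq] at hUV
      obtain ⟨hC, hm, hD⟩ := hUV
      have hm1 : m'.1 = m₁.1 := by
        have := congrArg Prod.fst hm
        simpa [mcat] using this
      have hm2 : m'.2 ++ (s' + c'', m''.1) :: m''.2 = m₁.2 ++ (z, m₂.1) :: m₂.2 := by
        have := congrArg Prod.snd hm
        simpa [mcat] using this
      simp only [NF.len_pure, NF.len_mixed] at hlen lU lV
      rcases list_split_cases hm2 with ⟨he1, he2, he3⟩ | ⟨mid, hms1, hms2⟩ | ⟨mid, hms1, hms2⟩
      · simp only [Prod.mk.injEq] at he2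
        refine ⟨(s', c''), ?_, ?_, ?_⟩
        · exact Finset.HasAntidiagonal.mem_antidiagonal.2 he2.1
        · rw [← hC]
          congr 1
          exact (Prod.ext hm1 he1).symm
        · rw [← hD]
          congr 1
          exact (Prod.ext he2.2 he3).symm
      · -- m₁ extends m' : impossible
        exfalso
        have hc : wt c' = wt C := by rw [hC]
        have hd : wt d'' = wt D := by rw [hD]
        have hmmeq : m₁ = mcat m' (s' + c'') (m''.1, mid) := by
          refine (Prod.ext ?_ ?_) <;> simp [mcat, ← hm1, hms1]
        have hw : mwt m₁ = mwt m' + wt (s' + c'') + mwt (m''.1, mid) := by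
          rw [hmmeq, mwt_mcat]
        have := mwt_pos (m''.1, mid)
        rw [wt_add] at hw
        omega
      · -- m' extends m₁ : impossible
        exfalso
        have hc : wt c' = wt C := by rw [hC]
        have hd : wt d'' = wt D := by rw [hD]
        have hm2eq : m₂ = mcat (m₂.1, mid) (s' + c'') m'' := by
          refine (Prod.ext ?_ ?_) <;> simp [mcat, hms2]
        have hw2 : mwt m₂ = mwt (m₂.1, mid) + wt (s' + c'') + mwt m'' := by
          conv_lhs => rw [hm2eq]
          rw [mwt_mcat]
        have := mwt_pos (m₂.1, mid)
        rw [wt_add] at hw2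
        omega
  · intro p hp
    rw [Finset.HasAntidiagonal.mem_antidiagonal] at hp
    rw [NF.mixed_mul_mixed, hp]
  · intro p _ h
    rcases h with h | h
    · rw [Finsupp.notMem_support_iff.1 h, zero_mul]
    · rw [Finsupp.notMem_support_iff.1 h, mul_zero]

/-- cut inside the initial pure run -/
lemma shapePM (hA : ∀ U ∈ A.coeff.support, NF.len U ≤ n) (hB : ∀ V ∈ B.coeff.support, NF.len V ≤ n)
    (C : Y →₀ ℕ) (m : Mid X Y) (D : Y →₀ ℕ)
    (h2 : mwt m + wt D ≤ n)
    (h3 : wt C + mwt m + wt D = 2 * n) :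
    (A * B).coeff (NF.mixed C m D)
      = ∑ p ∈ Finset.HasAntidiagonal.antidiagonal C, A.coeff (NF.pure p.1) * B.coeff (NF.mixed p.2 m D) := by
  classical
  rw [mul_apply_eq]
  refine sum_fiber _ _ _ _ _ _ _ ?_ ?_ ?_ ?_
  · intro i _ j _ hL hR
    simp only [NF.pure.injEq, NF.mixed.injEq] at hL hR
    exact Prod.ext hL hR.1
  · intro U hU V hV hUV hF
    have lU : NF.len U ≤ n := hA U hU
    have lV : NF.len V ≤ n := hB V hV
    have hlen : NF.len U + NF.len V = 2 * n := by
      rw [← NF.len_mul, hUV, NF.len_mixed]; omega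
    rcases U with c' | ⟨c', m', s'⟩ <;> rcases V with c'' | ⟨c'', m'', d''⟩
    · rw [NF.pure_mul_pure] at hUV; exact absurd hUV (by simp)
    · rw [NF.pure_mul_mixed] at hUV
      simp only [NF.mixed.injEq] at hUV
      obtain ⟨hC, hm, hD⟩ := hUV
      exact ⟨(c', c''), Finset.HasAntidiagonal.mem_antidiagonal.2 hC, rfl, by rw [hm, hD]⟩
    · rw [NF.mixed_mul_pure] at hUV
      simp only [NF.mixed.injEq] at hUV
      obtain ⟨hC, hm, hD⟩ := hUV
      exfalso
      have h5 : mwt m ≥ 1 := mwt_pos _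
      have h7 : mwt m' = mwt m := by rw [hm]
      simp only [NF.len_pure, NF.len_mixed] at hlen lU lV
      have : wt c' = wt C := by rw [hC]
      omega
    · rw [NF.mixed_mul_mixed] at hUV
      simp only [NF.mixed.injEq] at hUV
      obtain ⟨hC, hm, hD⟩ := hUV
      exfalso
      have h5 : mwt m' ≥ 1 := mwt_pos _
      have h6 : mwt m'' ≥ 1 := mwt_pos _
      simp only [NF.len_pure, NF.len_mixed] at hlen lU lV
      have : wt c' = wt C := by rw [hC]
      omega
  · intro p hp
    rw [Finset.HasAntidiagonal.mem_antidiagonal] at hp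
    rw [NF.pure_mul_mixed, hp]
  · intro p _ h
    rcases h with h | h
    · rw [Finsupp.notMem_support_iff.1 h, zero_mul]
    · rw [Finsupp.notMem_support_iff.1 h, mul_zero]

/-- cut inside the final pure run -/
lemma shapeMP (hA : ∀ U ∈ A.coeff.support, NF.len U ≤ n) (hB : ∀ V ∈ B.coeff.support, NF.len V ≤ n)
    (C : Y →₀ ℕ) (m : Mid X Y) (D : Y →₀ ℕ)
    (h1 : wt C + mwt m ≤ n)
    (h3 : wt C + mwt m + wt D = 2 * n) :
    (A * B).coeff (NF.mixed C m D)
      = ∑ p ∈ Finset.HasAntidiagonal.antidiagonal D, A.coeff (NF.mixed C m p.1) * B.coeff (NF.pure p.2) := by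
  classical
  rw [mul_apply_eq]
  refine sum_fiber _ _ _ _ _ _ _ ?_ ?_ ?_ ?_
  · intro i _ j _ hL hR
    simp only [NF.pure.injEq, NF.mixed.injEq] at hL hR
    exact Prod.ext hL.2.2 hR
  · intro U hU V hV hUV hF
    have lU : NF.len U ≤ n := hA U hU
    have lV : NF.len V ≤ n := hB V hV
    have hlen : NF.len U + NF.len V = 2 * n := by
      rw [← NF.len_mul, hUV, NF.len_mixed]; omega
    rcases U with c' | ⟨c', m', s'⟩ <;> rcases V with c'' | ⟨c'', m'', d''⟩
    · rw [NF.pure_mul_pure] at hUV; exact absurd hUV (by simp)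
    · rw [NF.pure_mul_mixed] at hUV
      simp only [NF.mixed.injEq] at hUV
      obtain ⟨hC, hm, hD⟩ := hUV
      exfalso
      have h5 : mwt m ≥ 1 := mwt_pos _
      have : wt c' ≤ wt C := by rw [← hC, wt_add]; omega
      simp only [NF.len_pure, NF.len_mixed] at hlen lU lV
      omega
    · rw [NF.mixed_mul_pure] at hUV
      simp only [NF.mixed.injEq] at hUV
      obtain ⟨hC, hm, hD⟩ := hUV
      exact ⟨(s', c''), Finset.HasAntidiagonal.mem_antidiagonal.2 hD, by rw [hC, hm], rfl⟩
    · rw [NF.mixed_mul_mixed] at hUV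
      simp only [NF.mixed.injEq] at hUV
      obtain ⟨hC, hm, hD⟩ := hUV
      exfalso
      have h5 : mwt m' ≥ 1 := mwt_pos _
      have h6 : mwt m'' ≥ 1 := mwt_pos _
      have hw : mwt m = mwt m' + wt (s' + c'') + mwt m'' := by rw [← hm, mwt_mcat]
      rw [wt_add] at hw
      simp only [NF.len_pure, NF.len_mixed] at hlen lU lV
      have : wt d'' = wt D := by rw [hD]
      omega
  · intro p hp
    rw [Finset.HasAntidiagonal.mem_antidiagonal] at hp
    rw [NF.mixed_mul_pure, hp]
  · intro p _ h
    rcases h with h | h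
    · rw [Finsupp.notMem_support_iff.1 h, zero_mul]
    · rw [Finsupp.notMem_support_iff.1 h, mul_zero]

end Shapes
end L42

namespace L42
section PartC
variable {X Y : Type} {k : Type} [Field k] [DecidableEq X] [DecidableEq Y]

open MvPolynomial

/-- top-degree coefficient function -/
noncomputable def tc (A : MonoidAlgebra k (NF X Y)) (n : ℕ) : NF X Y → k :=
  fun W => if NF.len W = n then A.coeff W else 0

def prefNF : NF X Y → (Y →₀ ℕ)
  | .pure c => c
  | .mixed c _ _ => c

def suffNF : NF X Y → (Y →₀ ℕ)
  | .pure c => c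
  | .mixed _ _ d => d

noncomputable def sliceL (f : NF X Y → k) (S : Finset (Y →₀ ℕ)) (c : Y →₀ ℕ) (m : Mid X Y) :
    MvPolynomial Y k :=
  ∑ s ∈ S, monomial s (f (NF.mixed c m s))

noncomputable def sliceR (f : NF X Y → k) (S : Finset (Y →₀ ℕ)) (m : Mid X Y) (d : Y →₀ ℕ) :
    MvPolynomial Y k :=
  ∑ t ∈ S, monomial t (f (NF.mixed t m d))

noncomputable def sliceP (f : NF X Y → k) (S : Finset (Y →₀ ℕ)) : MvPolynomial Y k :=
  ∑ s ∈ S, monomial s (f (NF.pure s))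

/-- hypothesis: `S` carries all pre/suf exponents of `f` -/
def Carries (f : NF X Y → k) (S : Finset (Y →₀ ℕ)) : Prop :=
  ∀ W, f W ≠ 0 → prefNF W ∈ S ∧ suffNF W ∈ S

variable {f : NF X Y → k} {S : Finset (Y →₀ ℕ)}

lemma coeff_sliceL (hS : Carries f S) (c : Y →₀ ℕ) (m : Mid X Y) (t : Y →₀ ℕ) :
    coeff t (sliceL f S c m) = f (NF.mixed c m t) := by
  rw [sliceL, coeff_sum]
  by_cases ht : t ∈ S
  · rw [Finset.sum_eq_single_of_mem t ht (fun b _ hb => by simp [coeff_monomial, hb])]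
    simp [coeff_monomial]
  · rw [Finset.sum_eq_zero (fun b hb => by
      have : b ≠ t := fun h => ht (h ▸ hb)
      simp [coeff_monomial, this])]
    by_contra h
    exact ht ((hS _ (Ne.symm h)).2)

lemma coeff_sliceR (hS : Carries f S) (m : Mid X Y) (d : Y →₀ ℕ) (t : Y →₀ ℕ) :
    coeff t (sliceR f S m d) = f (NF.mixed t m d) := by
  rw [sliceR, coeff_sum]
  by_cases ht : t ∈ S
  · rw [Finset.sum_eq_single_of_mem t ht (fun b _ hb => by simp [coeff_monomial, hb])]
    simp [coeff_monomial]
  · rw [Finset.sum_eq_zero (fun b hb => by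
      have : b ≠ t := fun h => ht (h ▸ hb)
      simp [coeff_monomial, this])]
    by_contra h
    exact ht ((hS _ (Ne.symm h)).1)

lemma coeff_sliceP (hS : Carries f S) (t : Y →₀ ℕ) :
    coeff t (sliceP f S) = f (NF.pure t) := by
  rw [sliceP, coeff_sum]
  by_cases ht : t ∈ S
  · rw [Finset.sum_eq_single_of_mem t ht (fun b _ hb => by simp [coeff_monomial, hb])]
    simp [coeff_monomial]
  · rw [Finset.sum_eq_zero (fun b hb => by
      have : b ≠ t := fun h => ht (h ▸ hb)
      simp [coeff_monomial, this])]
    by_contra h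
    exact ht ((hS _ (Ne.symm h)).1)

/-- two-variable-group polynomial -/
noncomputable def phi (f : NF X Y → k) (S : Finset (Y →₀ ℕ)) (m : Mid X Y) :
    MvPolynomial Y (MvPolynomial Y k) :=
  ∑ c ∈ S, monomial c (sliceL f S c m)

lemma sliceL_eq_zero (hS : Carries f S) {c : Y →₀ ℕ} (m : Mid X Y) (hc : c ∉ S) :
    sliceL f S c m = 0 := by
  refine MvPolynomial.ext _ _ fun t => ?_
  rw [coeff_sliceL hS, coeff_zero]
  by_contra h
  exact hc ((hS _ h).1)

lemma coeff_phi (hS : Carries f S) (m : Mid X Y) (c : Y →₀ ℕ) :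
    coeff c (phi f S m) = sliceL f S c m := by
  rw [phi, coeff_sum]
  by_cases hc : c ∈ S
  · rw [Finset.sum_eq_single_of_mem c hc (fun b _ hb => by simp [coeff_monomial, hb])]
    simp [coeff_monomial]
  · rw [Finset.sum_eq_zero (fun b hb => by
      have : b ≠ c := fun h => hc (h ▸ hb)
      simp [coeff_monomial, this]),
      sliceL_eq_zero hS m hc]

section helpers
variable {f g : NF X Y → k} {S : Finset (Y →₀ ℕ)}

lemma coeff_LR (hf : Carries f S) (hg : Carries g S) (c : Y →₀ ℕ) (m₁ m₂ : Mid X Y)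
    (d : Y →₀ ℕ) (V : Y →₀ ℕ) :
    coeff V (sliceL f S c m₁ * sliceR g S m₂ d)
      = ∑ p ∈ Finset.HasAntidiagonal.antidiagonal V, f (NF.mixed c m₁ p.1) * g (NF.mixed p.2 m₂ d) := by
  rw [coeff_mul]
  exact Finset.sum_congr rfl fun p _ => by rw [coeff_sliceL hf, coeff_sliceR hg]

lemma coeff_PR (hf : Carries f S) (hg : Carries g S) (m : Mid X Y) (d : Y →₀ ℕ) (V : Y →₀ ℕ) :
    coeff V (sliceP f S * sliceR g S m d)
      = ∑ p ∈ Finset.HasAntidiagonal.antidiagonal V, f (NF.pure p.1) * g (NF.mixed p.2 m d) := by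
  rw [coeff_mul]
  exact Finset.sum_congr rfl fun p _ => by rw [coeff_sliceP hf, coeff_sliceR hg]

lemma coeff_LP (hf : Carries f S) (hg : Carries g S) (c : Y →₀ ℕ) (m : Mid X Y) (V : Y →₀ ℕ) :
    coeff V (sliceL f S c m * sliceP g S)
      = ∑ p ∈ Finset.HasAntidiagonal.antidiagonal V, f (NF.mixed c m p.1) * g (NF.pure p.2) := by
  rw [coeff_mul]
  exact Finset.sum_congr rfl fun p _ => by rw [coeff_sliceL hf, coeff_sliceP hg]

end helpers
end PartC
end L42

namespace L42
section PartD
variable {X Y : Type} {k : Type} [Field k] [DecidableEq X] [DecidableEq Y]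

open MvPolynomial

noncomputable def carr (A B : MonoidAlgebra k (NF X Y)) : Finset (Y →₀ ℕ) :=
  ((A.coeff.support ∪ B.coeff.support).image prefNF) ∪ ((A.coeff.support ∪ B.coeff.support).image suffNF)

variable (A B : MonoidAlgebra k (NF X Y)) (n : ℕ)

lemma tc_apply_of_len {W : NF X Y} (h : NF.len W = n) : tc A n W = A.coeff W := if_pos h
lemma tc_apply_of_ne {W : NF X Y} (h : NF.len W ≠ n) : tc A n W = 0 := if_neg h

lemma len_eq_of_tc_ne {W : NF X Y} (h : tc A n W ≠ 0) : NF.len W = n := by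
  by_contra hh; exact h (tc_apply_of_ne A n hh)

lemma coeff_eq_zero_of_len_gt (hA : ∀ U ∈ A.coeff.support, NF.len U ≤ n) {W : NF X Y}
    (h : n < NF.len W) : A.coeff W = 0 := by
  by_contra h0
  exact absurd (hA W (Finsupp.mem_support_iff.2 h0)) (by omega)

lemma carries_left : Carries (tc A n) (carr A B) := by
  intro W h
  have hW : W ∈ A.coeff.support := by
    rw [Finsupp.mem_support_iff]
    intro h0
    exact h (by simp [tc, h0])
  constructor
  · exact Finset.mem_union_left _ (Finset.mem_image_of_mem _ (Finset.mem_union_left _ hW))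
  · exact Finset.mem_union_right _ (Finset.mem_image_of_mem _ (Finset.mem_union_left _ hW))

lemma carries_right : Carries (tc B n) (carr A B) := by
  intro W h
  have hW : W ∈ B.coeff.support := by
    rw [Finsupp.mem_support_iff]
    intro h0
    exact h (by simp [tc, h0])
  constructor
  · exact Finset.mem_union_left _ (Finset.mem_image_of_mem _ (Finset.mem_union_right _ hW))
  · exact Finset.mem_union_right _ (Finset.mem_image_of_mem _ (Finset.mem_union_right _ hW))

variable (hAB : A * B = B * A)
variable (hA : ∀ U ∈ A.coeff.support, NF.len U ≤ n) (hB : ∀ V ∈ B.coeff.support, NF.len V ≤ n)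

lemma J1 (hAB : A * B = B * A)
    (hA : ∀ U ∈ A.coeff.support, NF.len U ≤ n) (hB : ∀ V ∈ B.coeff.support, NF.len V ≤ n)
    (c : Y →₀ ℕ) (m₁ m₂ : Mid X Y) (d : Y →₀ ℕ) :
    sliceL (tc A n) (carr A B) c m₁ * sliceR (tc B n) (carr A B) m₂ d
      = sliceL (tc B n) (carr A B) c m₁ * sliceR (tc A n) (carr A B) m₂ d := by
  have hSA := carries_left A B n
  have hSB := carries_right A B n
  refine MvPolynomial.ext _ _ fun V => ?_
  rw [coeff_LR hSA hSB, coeff_LR hSB hSA]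
  by_cases H : wt c + mwt m₁ ≤ n ∧ mwt m₂ + wt d ≤ n ∧
      wt c + mwt m₁ + wt V + mwt m₂ + wt d = 2 * n
  · obtain ⟨H1, H2, H3⟩ := H
    have conv : ∀ (P Q : MonoidAlgebra k (NF X Y)),
        (∀ U ∈ P.coeff.support, NF.len U ≤ n) → (∀ U ∈ Q.coeff.support, NF.len U ≤ n) →
        (∑ p ∈ Finset.HasAntidiagonal.antidiagonal V, tc P n (NF.mixed c m₁ p.1) * tc Q n (NF.mixed p.2 m₂ d))
        = ∑ p ∈ Finset.HasAntidiagonal.antidiagonal V, P.coeff (NF.mixed c m₁ p.1) * Q.coeff (NF.mixed p.2 m₂ d) := by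
      intro P Q hP hQ
      refine Finset.sum_congr rfl fun p hp => ?_
      have hw : wt p.1 + wt p.2 = wt V := by
        rw [← wt_add, Finset.HasAntidiagonal.mem_antidiagonal.1 hp]
      by_cases hu : wt c + mwt m₁ + wt p.1 = n
      · have hv : wt p.2 + mwt m₂ + wt d = n := by omega
        rw [tc_apply_of_len P n (by rw [NF.len_mixed]; exact hu),
          tc_apply_of_len Q n (by rw [NF.len_mixed]; exact hv)]
      · rw [tc_apply_of_ne P n (by rw [NF.len_mixed]; exact hu)]
        rcases lt_or_gt_of_ne hu with hlt | hgt
        · have hq : Q.coeff (NF.mixed p.2 m₂ d) = 0 :=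
            coeff_eq_zero_of_len_gt Q n hQ (by rw [NF.len_mixed]; omega)
          rw [hq, zero_mul, mul_zero]
        · have hq : P.coeff (NF.mixed c m₁ p.1) = 0 :=
            coeff_eq_zero_of_len_gt P n hP (by rw [NF.len_mixed]; omega)
          rw [hq, zero_mul, zero_mul]
    rw [conv A B hA hB, conv B A hB hA,
      ← shapeMM A B n hA hB c m₁ V m₂ d H1 H2 (by omega),
      ← shapeMM B A n hB hA c m₁ V m₂ d H1 H2 (by omega), hAB]
  · have hz : ∀ (P Q : MonoidAlgebra k (NF X Y)),
        (∑ p ∈ Finset.HasAntidiagonal.antidiagonal V, tc P n (NF.mixed c m₁ p.1) * tc Q n (NF.mixed p.2 m₂ d))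
          = 0 := by
      intro P Q
      refine Finset.sum_eq_zero fun p hp => ?_
      have hw : wt p.1 + wt p.2 = wt V := by
        rw [← wt_add, Finset.HasAntidiagonal.mem_antidiagonal.1 hp]
      by_cases h1 : tc P n (NF.mixed c m₁ p.1) = 0
      · rw [h1, zero_mul]
      · have hu := len_eq_of_tc_ne P n h1
        rw [NF.len_mixed] at hu
        have h2 : tc Q n (NF.mixed p.2 m₂ d) = 0 := by
          apply tc_apply_of_ne
          rw [NF.len_mixed]
          intro hv
          exact H ⟨by omega, by omega, by omega⟩
        rw [h2, mul_zero]
    rw [hz A B, hz B A]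

lemma J2 (hAB : A * B = B * A)
    (hA : ∀ U ∈ A.coeff.support, NF.len U ≤ n) (hB : ∀ V ∈ B.coeff.support, NF.len V ≤ n)
    (m : Mid X Y) (d : Y →₀ ℕ) :
    sliceP (tc A n) (carr A B) * sliceR (tc B n) (carr A B) m d
      = sliceP (tc B n) (carr A B) * sliceR (tc A n) (carr A B) m d := by
  have hSA := carries_left A B n
  have hSB := carries_right A B n
  refine MvPolynomial.ext _ _ fun V => ?_
  rw [coeff_PR hSA hSB, coeff_PR hSB hSA]
  by_cases H : mwt m + wt d ≤ n ∧ wt V + mwt m + wt d = 2 * n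
  · obtain ⟨H2, H3⟩ := H
    have conv : ∀ (P Q : MonoidAlgebra k (NF X Y)),
        (∀ U ∈ P.coeff.support, NF.len U ≤ n) → (∀ U ∈ Q.coeff.support, NF.len U ≤ n) →
        (∑ p ∈ Finset.HasAntidiagonal.antidiagonal V, tc P n (NF.pure p.1) * tc Q n (NF.mixed p.2 m d))
        = ∑ p ∈ Finset.HasAntidiagonal.antidiagonal V, P.coeff (NF.pure p.1) * Q.coeff (NF.mixed p.2 m d) := by
      intro P Q hP hQ
      refine Finset.sum_congr rfl fun p hp => ?_
      have hw : wt p.1 + wt p.2 = wt V := by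
        rw [← wt_add, Finset.HasAntidiagonal.mem_antidiagonal.1 hp]
      by_cases hu : wt p.1 = n
      · have hv : wt p.2 + mwt m + wt d = n := by omega
        rw [tc_apply_of_len P n (by rw [NF.len_pure]; exact hu),
          tc_apply_of_len Q n (by rw [NF.len_mixed]; exact hv)]
      · rw [tc_apply_of_ne P n (by rw [NF.len_pure]; exact hu)]
        rcases lt_or_gt_of_ne hu with hlt | hgt
        · have hq : Q.coeff (NF.mixed p.2 m d) = 0 :=
            coeff_eq_zero_of_len_gt Q n hQ (by rw [NF.len_mixed]; omega)
          rw [hq, zero_mul, mul_zero]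
        · have hq : P.coeff (NF.pure p.1) = 0 :=
            coeff_eq_zero_of_len_gt P n hP (by rw [NF.len_pure]; omega)
          rw [hq, zero_mul, zero_mul]
    rw [conv A B hA hB, conv B A hB hA,
      ← shapePM A B n hA hB V m d H2 (by omega),
      ← shapePM B A n hB hA V m d H2 (by omega), hAB]
  · have hz : ∀ (P Q : MonoidAlgebra k (NF X Y)),
        (∑ p ∈ Finset.HasAntidiagonal.antidiagonal V, tc P n (NF.pure p.1) * tc Q n (NF.mixed p.2 m d)) = 0 := by
      intro P Q
      refine Finset.sum_eq_zero fun p hp => ?_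
      have hw : wt p.1 + wt p.2 = wt V := by
        rw [← wt_add, Finset.HasAntidiagonal.mem_antidiagonal.1 hp]
      by_cases h1 : tc P n (NF.pure p.1) = 0
      · rw [h1, zero_mul]
      · have hu := len_eq_of_tc_ne P n h1
        rw [NF.len_pure] at hu
        have h2 : tc Q n (NF.mixed p.2 m d) = 0 := by
          apply tc_apply_of_ne
          rw [NF.len_mixed]
          intro hv
          exact H ⟨by omega, by omega⟩
        rw [h2, mul_zero]
    rw [hz A B, hz B A]

lemma J3 (hAB : A * B = B * A)
    (hA : ∀ U ∈ A.coeff.support, NF.len U ≤ n) (hB : ∀ V ∈ B.coeff.support, NF.len V ≤ n)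
    (c : Y →₀ ℕ) (m : Mid X Y) :
    sliceL (tc A n) (carr A B) c m * sliceP (tc B n) (carr A B)
      = sliceL (tc B n) (carr A B) c m * sliceP (tc A n) (carr A B) := by
  have hSA := carries_left A B n
  have hSB := carries_right A B n
  refine MvPolynomial.ext _ _ fun V => ?_
  rw [coeff_LP hSA hSB, coeff_LP hSB hSA]
  by_cases H : wt c + mwt m ≤ n ∧ wt c + mwt m + wt V = 2 * n
  · obtain ⟨H1, H3⟩ := H
    have conv : ∀ (P Q : MonoidAlgebra k (NF X Y)),
        (∀ U ∈ P.coeff.support, NF.len U ≤ n) → (∀ U ∈ Q.coeff.support, NF.len U ≤ n) →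
        (∑ p ∈ Finset.HasAntidiagonal.antidiagonal V, tc P n (NF.mixed c m p.1) * tc Q n (NF.pure p.2))
        = ∑ p ∈ Finset.HasAntidiagonal.antidiagonal V, P.coeff (NF.mixed c m p.1) * Q.coeff (NF.pure p.2) := by
      intro P Q hP hQ
      refine Finset.sum_congr rfl fun p hp => ?_
      have hw : wt p.1 + wt p.2 = wt V := by
        rw [← wt_add, Finset.HasAntidiagonal.mem_antidiagonal.1 hp]
      by_cases hu : wt c + mwt m + wt p.1 = n
      · have hv : wt p.2 = n := by omega
        rw [tc_apply_of_len P n (by rw [NF.len_mixed]; exact hu),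
          tc_apply_of_len Q n (by rw [NF.len_pure]; exact hv)]
      · rw [tc_apply_of_ne P n (by rw [NF.len_mixed]; exact hu)]
        rcases lt_or_gt_of_ne hu with hlt | hgt
        · have hq : Q.coeff (NF.pure p.2) = 0 :=
            coeff_eq_zero_of_len_gt Q n hQ (by rw [NF.len_pure]; omega)
          rw [hq, zero_mul, mul_zero]
        · have hq : P.coeff (NF.mixed c m p.1) = 0 :=
            coeff_eq_zero_of_len_gt P n hP (by rw [NF.len_mixed]; omega)
          rw [hq, zero_mul, zero_mul]
    rw [conv A B hA hB, conv B A hB hA,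
      ← shapeMP A B n hA hB c m V H1 (by omega),
      ← shapeMP B A n hB hA c m V H1 (by omega), hAB]
  · have hz : ∀ (P Q : MonoidAlgebra k (NF X Y)),
        (∑ p ∈ Finset.HasAntidiagonal.antidiagonal V, tc P n (NF.mixed c m p.1) * tc Q n (NF.pure p.2)) = 0 := by
      intro P Q
      refine Finset.sum_eq_zero fun p hp => ?_
      have hw : wt p.1 + wt p.2 = wt V := by
        rw [← wt_add, Finset.HasAntidiagonal.mem_antidiagonal.1 hp]
      by_cases h1 : tc P n (NF.mixed c m p.1) = 0
      · rw [h1, zero_mul]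
      · have hu := len_eq_of_tc_ne P n h1
        rw [NF.len_mixed] at hu
        have h2 : tc Q n (NF.pure p.2) = 0 := by
          apply tc_apply_of_ne
          rw [NF.len_pure]
          intro hv
          exact H ⟨by omega, by omega⟩
        rw [h2, mul_zero]
    rw [hz A B, hz B A]

end PartD
end L42

namespace L42
section PartE
variable {X Y : Type} {k : Type} [Field k] [DecidableEq X] [DecidableEq Y]

open MvPolynomial

lemma hexch {f : NF X Y → k} {S : Finset (Y →₀ ℕ)} (hf : Carries f S)
    (r : MvPolynomial Y k) (m : Mid X Y) (e d : Y →₀ ℕ) :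
    coeff d (coeff e (MvPolynomial.map (MvPolynomial.C (σ := Y)) r * phi f S m))
      = coeff e (r * sliceR f S m d) := by
  rw [coeff_mul, coeff_mul]
  have h1 : ∀ p ∈ Finset.HasAntidiagonal.antidiagonal e,
      coeff p.1 (MvPolynomial.map (MvPolynomial.C (σ := Y)) r) * coeff p.2 (phi f S m)
        = MvPolynomial.C (coeff p.1 r) * sliceL f S p.2 m := by
    intro p _
    rw [coeff_map, coeff_phi hf]
  rw [Finset.sum_congr rfl h1, coeff_sum]
  refine Finset.sum_congr rfl fun p _ => ?_
  rw [coeff_C_mul, coeff_sliceL hf, coeff_sliceR hf]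

lemma slice_ne_zero_iffs {f : NF X Y → k} {S : Finset (Y →₀ ℕ)} (hf : Carries f S)
    {c : Y →₀ ℕ} {m : Mid X Y} {d : Y →₀ ℕ} (h : f (NF.mixed c m d) ≠ 0) :
    sliceL f S c m ≠ 0 ∧ sliceR f S m d ≠ 0 ∧ phi f S m ≠ 0 := by
  refine ⟨?_, ?_, ?_⟩
  · intro h0
    have h1 := coeff_sliceL hf c m d
    rw [h0, coeff_zero] at h1
    exact h h1.symm
  · intro h0
    have h1 := coeff_sliceR hf m d c
    rw [h0, coeff_zero] at h1
    exact h h1.symm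
  · intro h0
    have h1 := coeff_phi hf m c
    rw [h0, coeff_zero] at h1
    have h2 := coeff_sliceL hf c m d
    rw [← h1, coeff_zero] at h2
    exact h h2.symm

lemma key (A B : MonoidAlgebra k (NF X Y)) (n : ℕ)
    (hAB : A * B = B * A)
    (hA : ∀ U ∈ A.coeff.support, NF.len U ≤ n) (hB : ∀ V ∈ B.coeff.support, NF.len V ≤ n)
    (hBtop : ∃ W, B.coeff W ≠ 0 ∧ NF.len W = n)
    (hnpA : ∃ c m d, tc A n (NF.mixed c m d) ≠ 0) :
    ∃ lam : k, ∀ W, NF.len W = n → A.coeff W = lam * B.coeff W := by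
  have hSA : Carries (tc A n) (carr A B) := carries_left A B n
  have hSB : Carries (tc B n) (carr A B) := carries_right A B n
  obtain ⟨c₀, m₀, d₀, hnp0⟩ := hnpA
  -- B is non-pure at the top
  have hβmix : ∃ c m d, tc B n (NF.mixed c m d) ≠ 0 := by
    by_contra hcon
    push_neg at hcon
    obtain ⟨W0, hW0, hlen0⟩ := hBtop
    have hPβ : sliceP (tc B n) (carr A B) ≠ 0 := by
      rcases W0 with s | ⟨c, m, d⟩
      · intro h0
        have h1 := coeff_sliceP hSB s
        rw [h0, coeff_zero] at h1
        rw [tc_apply_of_len B n hlen0] at h1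
        exact hW0 h1.symm
      · refine absurd (hcon c m d) ?_
        rw [tc_apply_of_len B n hlen0]
        exact hW0
    have hRβ : sliceR (tc B n) (carr A B) m₀ d₀ = 0 := by
      refine MvPolynomial.ext _ _ fun t => ?_
      rw [coeff_sliceR hSB, coeff_zero]
      exact hcon t m₀ d₀
    have hJ := J2 A B n hAB hA hB m₀ d₀
    rw [hRβ, mul_zero] at hJ
    have hRα : sliceR (tc A n) (carr A B) m₀ d₀ ≠ 0 := (slice_ne_zero_iffs hSA hnp0).2.1
    rcases mul_eq_zero.1 hJ.symm with h | h
    · exact hPβ h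
    · exact hRα h
  obtain ⟨c₁, m₁, d₁, hβ1⟩ := hβmix
  have hq : sliceR (tc B n) (carr A B) m₁ d₁ ≠ 0 := (slice_ne_zero_iffs hSB hβ1).2.1
  have hL : ∀ c m, sliceR (tc B n) (carr A B) m₁ d₁ * sliceL (tc A n) (carr A B) c m
      = sliceR (tc A n) (carr A B) m₁ d₁ * sliceL (tc B n) (carr A B) c m := by
    intro c m
    have := J1 A B n hAB hA hB c m m₁ d₁
    rw [mul_comm (sliceR (tc B n) (carr A B) m₁ d₁), mul_comm (sliceR (tc A n) (carr A B) m₁ d₁)]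
    exact this
  have hLα0 : sliceL (tc A n) (carr A B) c₀ m₀ ≠ 0 := (slice_ne_zero_iffs hSA hnp0).1
  have hLβ0 : sliceL (tc B n) (carr A B) c₀ m₀ ≠ 0 ∧ sliceR (tc A n) (carr A B) m₁ d₁ ≠ 0 := by
    have h := hL c₀ m₀
    have hne : sliceR (tc B n) (carr A B) m₁ d₁ * sliceL (tc A n) (carr A B) c₀ m₀ ≠ 0 :=
      mul_ne_zero hq hLα0
    rw [h] at hne
    exact ⟨right_ne_zero_of_mul hne, left_ne_zero_of_mul hne⟩
  have hR : ∀ m d, sliceR (tc B n) (carr A B) m₁ d₁ * sliceR (tc A n) (carr A B) m d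
      = sliceR (tc A n) (carr A B) m₁ d₁ * sliceR (tc B n) (carr A B) m d := by
    intro m d
    have hJ := J1 A B n hAB hA hB c₀ m₀ m d
    apply mul_left_cancel₀ hLβ0.1
    calc sliceL (tc B n) (carr A B) c₀ m₀ *
          (sliceR (tc B n) (carr A B) m₁ d₁ * sliceR (tc A n) (carr A B) m d)
        = sliceR (tc B n) (carr A B) m₁ d₁ *
          (sliceL (tc B n) (carr A B) c₀ m₀ * sliceR (tc A n) (carr A B) m d) := by ring
      _ = sliceR (tc B n) (carr A B) m₁ d₁ *
          (sliceL (tc A n) (carr A B) c₀ m₀ * sliceR (tc B n) (carr A B) m d) := by rw [← hJ]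
      _ = (sliceR (tc B n) (carr A B) m₁ d₁ * sliceL (tc A n) (carr A B) c₀ m₀) *
          sliceR (tc B n) (carr A B) m d := by ring
      _ = (sliceR (tc A n) (carr A B) m₁ d₁ * sliceL (tc B n) (carr A B) c₀ m₀) *
          sliceR (tc B n) (carr A B) m d := by rw [hL c₀ m₀]
      _ = sliceL (tc B n) (carr A B) c₀ m₀ *
          (sliceR (tc A n) (carr A B) m₁ d₁ * sliceR (tc B n) (carr A B) m d) := by ring
  have hP : sliceR (tc B n) (carr A B) m₁ d₁ * sliceP (tc A n) (carr A B)
      = sliceR (tc A n) (carr A B) m₁ d₁ * sliceP (tc B n) (carr A B) := by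
    have := J2 A B n hAB hA hB m₁ d₁
    rw [mul_comm (sliceR (tc B n) (carr A B) m₁ d₁), mul_comm (sliceR (tc A n) (carr A B) m₁ d₁)]
    exact this
  have hB1 : ∀ m, C (sliceR (tc B n) (carr A B) m₁ d₁) * phi (tc A n) (carr A B) m
      = C (sliceR (tc A n) (carr A B) m₁ d₁) * phi (tc B n) (carr A B) m := by
    intro m
    refine MvPolynomial.ext _ _ fun c => ?_
    rw [coeff_C_mul, coeff_C_mul, coeff_phi hSA, coeff_phi hSB, hL c m]
  have hB2 : ∀ m, MvPolynomial.map (MvPolynomial.C (σ := Y)) (sliceR (tc B n) (carr A B) m₁ d₁)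
        * phi (tc A n) (carr A B) m
      = MvPolynomial.map (MvPolynomial.C (σ := Y)) (sliceR (tc A n) (carr A B) m₁ d₁)
        * phi (tc B n) (carr A B) m := by
    intro m
    refine MvPolynomial.ext _ _ fun e => ?_
    refine MvPolynomial.ext _ _ fun d => ?_
    rw [hexch hSA _ m e d, hexch hSB _ m e d, hR m d]
  have hΦβ0 : phi (tc B n) (carr A B) m₀ ≠ 0 := by
    intro h0
    have h1 := coeff_phi hSB m₀ c₀
    rw [h0, coeff_zero] at h1
    exact hLβ0.1 h1.symm
  have hprop : C (sliceR (tc B n) (carr A B) m₁ d₁)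
        * MvPolynomial.map (MvPolynomial.C (σ := Y)) (sliceR (tc A n) (carr A B) m₁ d₁)
      = C (sliceR (tc A n) (carr A B) m₁ d₁)
        * MvPolynomial.map (MvPolynomial.C (σ := Y)) (sliceR (tc B n) (carr A B) m₁ d₁) := by
    apply mul_right_cancel₀ hΦβ0
    calc C (sliceR (tc B n) (carr A B) m₁ d₁)
          * MvPolynomial.map (MvPolynomial.C (σ := Y)) (sliceR (tc A n) (carr A B) m₁ d₁)
          * phi (tc B n) (carr A B) m₀
        = C (sliceR (tc B n) (carr A B) m₁ d₁)
          * (MvPolynomial.map (MvPolynomial.C (σ := Y)) (sliceR (tc A n) (carr A B) m₁ d₁)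
            * phi (tc B n) (carr A B) m₀) := by ring
      _ = C (sliceR (tc B n) (carr A B) m₁ d₁)
          * (MvPolynomial.map (MvPolynomial.C (σ := Y)) (sliceR (tc B n) (carr A B) m₁ d₁)
            * phi (tc A n) (carr A B) m₀) := by rw [← hB2]
      _ = MvPolynomial.map (MvPolynomial.C (σ := Y)) (sliceR (tc B n) (carr A B) m₁ d₁)
          * (C (sliceR (tc B n) (carr A B) m₁ d₁) * phi (tc A n) (carr A B) m₀) := by ring
      _ = MvPolynomial.map (MvPolynomial.C (σ := Y)) (sliceR (tc B n) (carr A B) m₁ d₁)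
          * (C (sliceR (tc A n) (carr A B) m₁ d₁) * phi (tc B n) (carr A B) m₀) := by rw [hB1]
      _ = C (sliceR (tc A n) (carr A B) m₁ d₁)
          * MvPolynomial.map (MvPolynomial.C (σ := Y)) (sliceR (tc B n) (carr A B) m₁ d₁)
          * phi (tc B n) (carr A B) m₀ := by ring
  obtain ⟨σ₀, hσ0⟩ : ∃ σ₀, coeff σ₀ (sliceR (tc B n) (carr A B) m₁ d₁) ≠ 0 := by
    by_contra hcon
    push_neg at hcon
    exact hq (MvPolynomial.ext _ _ fun t => by rw [hcon t, coeff_zero])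
  set lam := coeff σ₀ (sliceR (tc A n) (carr A B) m₁ d₁)
      / coeff σ₀ (sliceR (tc B n) (carr A B) m₁ d₁) with hlam
  have hpq : coeff σ₀ (sliceR (tc B n) (carr A B) m₁ d₁) • sliceR (tc A n) (carr A B) m₁ d₁
      = coeff σ₀ (sliceR (tc A n) (carr A B) m₁ d₁) • sliceR (tc B n) (carr A B) m₁ d₁ := by
    have h1 := congrArg (coeff σ₀) hprop
    rw [coeff_C_mul, coeff_C_mul, coeff_map, coeff_map] at h1
    rw [← MvPolynomial.C_mul', ← MvPolynomial.C_mul']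
    rw [mul_comm (sliceR (tc B n) (carr A B) m₁ d₁),
      mul_comm (sliceR (tc A n) (carr A B) m₁ d₁)] at h1
    exact h1.symm
  have hplam : sliceR (tc A n) (carr A B) m₁ d₁ = lam • sliceR (tc B n) (carr A B) m₁ d₁ := by
    have h2 := congrArg
      (fun z => (coeff σ₀ (sliceR (tc B n) (carr A B) m₁ d₁))⁻¹ • z) hpq
    simp only [smul_smul, inv_mul_cancel₀ hσ0, one_smul] at h2
    rw [h2, hlam]
    congr 1
    rw [div_eq_mul_inv]
    ring
  refine ⟨lam, fun W hW => ?_⟩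
  rcases W with s | ⟨c, m, d⟩
  · have h1 : sliceR (tc B n) (carr A B) m₁ d₁ * sliceP (tc A n) (carr A B)
        = sliceR (tc B n) (carr A B) m₁ d₁ * (lam • sliceP (tc B n) (carr A B)) := by
      rw [hP, hplam, smul_mul_assoc, mul_smul_comm]
    have h2 := mul_left_cancel₀ hq h1
    have h3 := congrArg (coeff s) h2
    rw [coeff_sliceP hSA, coeff_smul, coeff_sliceP hSB] at h3
    rw [← tc_apply_of_len A n hW, ← tc_apply_of_len B n hW, h3, smul_eq_mul]
  · have h1 : sliceR (tc B n) (carr A B) m₁ d₁ * sliceL (tc A n) (carr A B) c m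
        = sliceR (tc B n) (carr A B) m₁ d₁ * (lam • sliceL (tc B n) (carr A B) c m) := by
      rw [hL, hplam, smul_mul_assoc, mul_smul_comm]
    have h2 := mul_left_cancel₀ hq h1
    have h3 := congrArg (coeff d) h2
    rw [coeff_sliceL hSA, coeff_smul, coeff_sliceL hSB] at h3
    rw [← tc_apply_of_len A n hW, ← tc_apply_of_len B n hW, h3, smul_eq_mul]

end PartE
end L42

namespace L42
section PartF
variable {X Y : Type}

lemma len_mul' (u v : CoprodM X Y) : len (u * v) = len u + len v := by
  simp [len, map_mul]

lemma len_gen (a : X ⊕ Y) : NF.len (gen a : NF X Y) = 1 := by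
  rcases a with x | y
  · simp [gen, NF.len, wt_zero, mwt]
  · simp [gen, NF.len, wt_single]

lemma len_mk_of (a : X ⊕ Y) : len (mk X Y (FreeMonoid.of a)) = 1 := rfl

lemma len_nfHom (w : CoprodM X Y) : NF.len (nfHom X Y w) = len w := by
  induction w using Con.induction_on with
  | _ l =>
    show NF.len (nfHom X Y (mk X Y l)) = len (mk X Y l)
    induction l using FreeMonoid.recOn with
    | one =>
        rw [map_one, map_one]
        show NF.len (1 : NF X Y) = len (1 : CoprodM X Y)
        simp [NF.one_def, NF.len, wt_zero, len, map_one]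
    | of_mul a l ih =>
        rw [map_mul, map_mul, NF.len_mul, len_mul', ih]
        congr 1
        rw [nfHom_mk, FreeMonoid.lift_eval_of, len_gen]
        exact (len_mk_of a).symm

lemma notpure_mixed (w : CoprodM X Y) (h : ¬ IsPure w) :
    ∃ c m d, nfHom X Y w = NF.mixed c m d := by
  rcases hcase : nfHom X Y w with c | ⟨c, m, d⟩
  · exfalso
    apply h
    refine ⟨FreeMonoid.ofList c.toMultiset.toList, ?_⟩
    show pe c = w
    rw [← nfInv_nfHom w, hcase]
    rfl
  · exact ⟨c, m, d, rfl⟩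


lemma nfEquiv_apply (w : CoprodM X Y) : nfEquiv X Y w = nfHom X Y w := rfl

end PartF
end L42


/-- Lemma 4.2: commuting elements of equal total degree `n`, at least one of
which is not top-pure, have proportional leading terms. -/
theorem coprod_leading_terms_proportional_of_not_top_pure {X Y k : Type} [Field k]
    (a b : MonoidAlgebra k (CoprodM X Y)) (n : ℕ)
    (hcomm : a * b = b * a)
    (hda : (∃ w ∈ a.coeff.support, len w = n) ∧ ∀ w ∈ a.coeff.support, len w ≤ n)
    (hdb : (∃ w ∈ b.coeff.support, len w = n) ∧ ∀ w ∈ b.coeff.support, len w ≤ n)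
    (hnp : (∃ w ∈ a.coeff.support, len w = n ∧ ¬ IsPure w) ∨
           (∃ w ∈ b.coeff.support, len w = n ∧ ¬ IsPure w)) :
    ∃ lam : k, ∀ w : CoprodM X Y, len w = n → a.coeff w = lam * b.coeff w := by
  classical
  set E := L42.nfEquiv X Y with hE
  set A : MonoidAlgebra k (L42.NF X Y) := MonoidAlgebra.mapDomain (⇑E) a with hAdef
  set B : MonoidAlgebra k (L42.NF X Y) := MonoidAlgebra.mapDomain (⇑E) b with hBdef
  have hApp : ∀ (x : MonoidAlgebra k (CoprodM X Y)) (w : CoprodM X Y),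
      (MonoidAlgebra.mapDomain (⇑E) x).coeff (E w) = x.coeff w :=
    fun x w => Finsupp.mapDomain_apply (EquivLike.injective E) x.coeff w
  have hMul : A * B = B * A := by
    rw [hAdef, hBdef, ← MonoidAlgebra.mapDomain_mul (F := CoprodM X Y ≃* L42.NF X Y) E a b,
      ← MonoidAlgebra.mapDomain_mul (F := CoprodM X Y ≃* L42.NF X Y) E b a, hcomm]
  have hlenE : ∀ w : CoprodM X Y, L42.NF.len (E w) = len w := fun w => L42.len_nfHom w
  have hsupp : ∀ (x : MonoidAlgebra k (CoprodM X Y)) (U : L42.NF X Y),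
      (MonoidAlgebra.mapDomain (⇑E) x).coeff U ≠ 0 → ∃ w, x.coeff w ≠ 0 ∧ E w = U := by
    intro x U hU
    have hmem : U ∈ (MonoidAlgebra.mapDomain (⇑E) x).coeff.support := Finsupp.mem_support_iff.2 hU
    have hsub := Finsupp.mapDomain_support (f := ⇑E) (s := x.coeff) hmem
    obtain ⟨w, hw, hwe⟩ := Finset.mem_image.1 hsub
    exact ⟨w, Finsupp.mem_support_iff.1 hw, hwe⟩
  have hA : ∀ U ∈ A.coeff.support, L42.NF.len U ≤ n := by
    intro U hU
    obtain ⟨w, hw, rfl⟩ := hsupp a U (Finsupp.mem_support_iff.1 hU)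
    rw [hlenE]
    exact hda.2 w (Finsupp.mem_support_iff.2 hw)
  have hB : ∀ U ∈ B.coeff.support, L42.NF.len U ≤ n := by
    intro U hU
    obtain ⟨w, hw, rfl⟩ := hsupp b U (Finsupp.mem_support_iff.1 hU)
    rw [hlenE]
    exact hdb.2 w (Finsupp.mem_support_iff.2 hw)
  have hAtop : ∃ W, A.coeff W ≠ 0 ∧ L42.NF.len W = n := by
    obtain ⟨w, hw, hl⟩ := hda.1
    exact ⟨E w, by rw [hApp a w]; exact Finsupp.mem_support_iff.1 hw, by rw [hlenE]; exact hl⟩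
  have hBtop : ∃ W, B.coeff W ≠ 0 ∧ L42.NF.len W = n := by
    obtain ⟨w, hw, hl⟩ := hdb.1
    exact ⟨E w, by rw [hApp b w]; exact Finsupp.mem_support_iff.1 hw, by rw [hlenE]; exact hl⟩
  have hnpX : ∀ (x : MonoidAlgebra k (CoprodM X Y)) (w : CoprodM X Y), w ∈ x.coeff.support →
      len w = n → ¬ IsPure w →
      ∃ c m d, L42.tc (MonoidAlgebra.mapDomain (⇑E) x) n (L42.NF.mixed c m d) ≠ 0 := by
    intro x w hw hl hpure
    obtain ⟨c, m, d, hmix⟩ := L42.notpure_mixed w hpure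
    refine ⟨c, m, d, ?_⟩
    have hEw : E w = L42.NF.mixed c m d := hmix
    rw [← hEw, L42.tc_apply_of_len _ n (by rw [hlenE]; exact hl), hApp x w]
    exact Finsupp.mem_support_iff.1 hw
  rcases hnp with ⟨w, hw, hl, hpure⟩ | ⟨w, hw, hl, hpure⟩
  · obtain ⟨lam, hlam⟩ := L42.key A B n hMul hA hB hBtop (hnpX a w hw hl hpure)
    refine ⟨lam, fun w hwn => ?_⟩
    have := hlam (E w) (by rw [hlenE]; exact hwn)
    rwa [hApp a w, hApp b w] at this
  · obtain ⟨mu, hmu⟩ := L42.key B A n hMul.symm hB hA hAtop (hnpX b w hw hl hpure)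
    have hmu0 : mu ≠ 0 := by
      obtain ⟨w0, hw0, hl0⟩ := hdb.1
      intro h0
      have := hmu (E w0) (by rw [hlenE]; exact hl0)
      rw [hApp b w0, h0, zero_mul] at this
      exact (Finsupp.mem_support_iff.1 hw0) this
    refine ⟨mu⁻¹, fun w hwn => ?_⟩
    have := hmu (E w) (by rw [hlenE]; exact hwn)
    rw [hApp b w, hApp a w] at this
    rw [this]
    field_simp
end
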